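/- arXiv:2006.02984 — 6 statements merged into one kernel-verified Lean document; each statement's English description precedes it below -/
import Mathlib

section
/- Let V be continuous on compact metric spaces X × Y, let (μ,ν) be a saddle point of 𝒱(μ,ν)=∫∫V dμ dν, and let μ̄ ∈ P(X). Then μ̄ maximizes the V-variance over P(X) if and only if (μ̄, ν) is also a saddle point of 𝒱. -/
open MeasureTheory

section Aux

variable {X Y : Type*}
    [MetricSpace X] [CompactSpace X] [MeasurableSpace X] [BorelSpace X] [Nonempty X]
    [MetricSpace Y] [CompactSpace Y] [MeasurableSpace Y] [BorelSpace Y] [Nonempty Y]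
    (V : X × Y → ℝ)

lemma aux_integrable (hV : Continuous V) (μ' : Measure X) (ν' : Measure Y)
    [IsProbabilityMeasure μ'] [IsProbabilityMeasure ν'] :
    Integrable V (μ'.prod ν') :=
  hV.integrable_of_hasCompactSupport (HasCompactSupport.of_compactSpace V)

/-- Fubini swap for `𝒱`. -/
lemma aux_swap (hV : Continuous V) (μ' : Measure X) (ν' : Measure Y)
    [IsProbabilityMeasure μ'] [IsProbabilityMeasure ν'] :
    (∫ x, ∫ y, V (x, y) ∂ν' ∂μ') = ∫ y, ∫ x, V (x, y) ∂μ' ∂ν' := by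
  exact integral_integral_swap (f := fun x y => V (x, y)) (aux_integrable V hV μ' ν')

lemma aux_integrable_G (hV : Continuous V) (μ' : Measure X) (ν' : Measure Y)
    [IsProbabilityMeasure μ'] [IsProbabilityMeasure ν'] :
    Integrable (fun y => ∫ x, V (x, y) ∂μ') ν' :=
  (aux_integrable V hV μ' ν').integral_prod_right

lemma aux_bddBelow (hV : Continuous V) (μ' : Measure X) [IsProbabilityMeasure μ'] :
    BddBelow (Set.range fun y => ∫ x, V (x, y) ∂μ') := by
  obtain ⟨M, hM⟩ := (isCompact_univ (X := X × Y)).exists_bound_of_continuousOn hV.continuousOn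
  refine ⟨-M, ?_⟩
  rintro _ ⟨y, rfl⟩
  calc (-M : ℝ) = ∫ _ : X, (-M : ℝ) ∂μ' := by simp
    _ ≤ ∫ x, V (x, y) ∂μ' := by
        refine integral_mono (integrable_const _) ?_ (fun x => ?_)
        · exact (hV.comp (continuous_id.prodMk continuous_const)).integrable_of_hasCompactSupport
            (HasCompactSupport.of_compactSpace _)
        · have := hM (x, y) trivial
          have := abs_le.mp this
          linarith [this.1]

/-- `Var(μ') ≤ 𝒱(μ', ν'')` for any probability `ν''`. -/
lemma aux_var_le (hV : Continuous V) (μ' : Measure X) (ν'' : Measure Y)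
    [IsProbabilityMeasure μ'] [IsProbabilityMeasure ν''] :
    (⨅ y : Y, ∫ x, V (x, y) ∂μ') ≤ ∫ x, ∫ y, V (x, y) ∂ν'' ∂μ' := by
  rw [aux_swap V hV]
  calc (⨅ y : Y, ∫ x, V (x, y) ∂μ')
      = ∫ _ : Y, (⨅ y : Y, ∫ x, V (x, y) ∂μ') ∂ν'' := by simp
    _ ≤ ∫ y, ∫ x, V (x, y) ∂μ' ∂ν'' := by
        refine integral_mono (integrable_const _) (aux_integrable_G V hV μ' ν'') (fun y => ?_)
        exact ciInf_le (aux_bddBelow V hV μ') y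

/-- `𝒱(μ', dirac y) = ∫ x, V (x,y) ∂μ'`. -/
lemma aux_dirac (hV : Continuous V) (μ' : Measure X) (y : Y) :
    (∫ x, ∫ y', V (x, y') ∂(Measure.dirac y) ∂μ') = ∫ x, V (x, y) ∂μ' := by
  refine integral_congr_ae (Filter.Eventually.of_forall fun x => ?_)
  exact integral_dirac (fun y' => V (x, y')) y

/-- If `μ'` is optimal against every `ν'` then `𝒱(μ', ν) ≤ Var(μ')`. -/
lemma aux_le_var (hV : Continuous V) (μ' : Measure X) (ν : Measure Y)
    [IsProbabilityMeasure μ'] [IsProbabilityMeasure ν]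
    (h : ∀ ν'' : Measure Y, IsProbabilityMeasure ν'' →
      (∫ x, ∫ y, V (x, y) ∂ν ∂μ') ≤ ∫ x, ∫ y, V (x, y) ∂ν'' ∂μ') :
    (∫ x, ∫ y, V (x, y) ∂ν ∂μ') ≤ ⨅ y : Y, ∫ x, V (x, y) ∂μ' := by
  refine le_ciInf fun y => ?_
  have := h (Measure.dirac y) (by infer_instance)
  rwa [aux_dirac V hV μ' y] at this

end Aux

/-- Given a saddle point `(μ,ν)` of `𝒱`, a probability measure `μbar` maximizes the
`V`-variance iff `(μbar, ν)` is also a saddle point of `𝒱`. -/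
theorem maximizer_iff_saddle {X Y : Type*}
    [MetricSpace X] [CompactSpace X] [MeasurableSpace X] [BorelSpace X] [Nonempty X]
    [MetricSpace Y] [CompactSpace Y] [MeasurableSpace Y] [BorelSpace Y] [Nonempty Y]
    (V : X × Y → ℝ) (hV : Continuous V)
    (μ : Measure X) (ν : Measure Y) [IsProbabilityMeasure μ] [IsProbabilityMeasure ν]
    (hsaddle₁ : ∀ μ' : Measure X, IsProbabilityMeasure μ' →
      (∫ x, ∫ y, V (x, y) ∂ν ∂μ') ≤ ∫ x, ∫ y, V (x, y) ∂ν ∂μ)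
    (hsaddle₂ : ∀ ν' : Measure Y, IsProbabilityMeasure ν' →
      (∫ x, ∫ y, V (x, y) ∂ν ∂μ) ≤ ∫ x, ∫ y, V (x, y) ∂ν' ∂μ)
    (μbar : Measure X) [IsProbabilityMeasure μbar] :
    (∀ μ' : Measure X, IsProbabilityMeasure μ' →
      (⨅ y : Y, ∫ x, V (x, y) ∂μ') ≤ ⨅ y : Y, ∫ x, V (x, y) ∂μbar) ↔
    ((∀ μ' : Measure X, IsProbabilityMeasure μ' →
      (∫ x, ∫ y, V (x, y) ∂ν ∂μ') ≤ ∫ x, ∫ y, V (x, y) ∂ν ∂μbar) ∧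
     (∀ ν' : Measure Y, IsProbabilityMeasure ν' →
      (∫ x, ∫ y, V (x, y) ∂ν ∂μbar) ≤ ∫ x, ∫ y, V (x, y) ∂ν' ∂μbar)) := by
  -- value of the game: 𝒱(μ,ν) = Var(μ)
  have hval : (∫ x, ∫ y, V (x, y) ∂ν ∂μ) = ⨅ y : Y, ∫ x, V (x, y) ∂μ :=
    le_antisymm (aux_le_var V hV μ ν hsaddle₂) (aux_var_le V hV μ ν)
  constructor
  · intro h
    -- chain of inequalities forces equalities
    have h1 : (⨅ y : Y, ∫ x, V (x, y) ∂μ) ≤ ⨅ y : Y, ∫ x, V (x, y) ∂μbar := h μ (by infer_instance)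
    have h2 : (⨅ y : Y, ∫ x, V (x, y) ∂μbar) ≤ ∫ x, ∫ y, V (x, y) ∂ν ∂μbar :=
      aux_var_le V hV μbar ν
    have h3 : (∫ x, ∫ y, V (x, y) ∂ν ∂μbar) ≤ ∫ x, ∫ y, V (x, y) ∂ν ∂μ :=
      hsaddle₁ μbar (by infer_instance)
    have hEq : (∫ x, ∫ y, V (x, y) ∂ν ∂μbar) = ∫ x, ∫ y, V (x, y) ∂ν ∂μ := by
      rw [hval] at h3 ⊢; linarith
    have hVarbar : (∫ x, ∫ y, V (x, y) ∂ν ∂μbar) = ⨅ y : Y, ∫ x, V (x, y) ∂μbar := by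
      rw [hval] at h3; linarith
    refine ⟨fun μ' hμ' => ?_, fun ν' hν' => ?_⟩
    · have := hsaddle₁ μ' hμ'; rw [hEq]; exact this
    · have : IsProbabilityMeasure ν' := hν'
      calc (∫ x, ∫ y, V (x, y) ∂ν ∂μbar) = ⨅ y : Y, ∫ x, V (x, y) ∂μbar := hVarbar
        _ ≤ ∫ x, ∫ y, V (x, y) ∂ν' ∂μbar := aux_var_le V hV μbar ν'
  · rintro ⟨h1, h2⟩ μ' hμ'
    have : IsProbabilityMeasure μ' := hμ'
    have hEq : (∫ x, ∫ y, V (x, y) ∂ν ∂μbar) = ∫ x, ∫ y, V (x, y) ∂ν ∂μ :=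
      le_antisymm (hsaddle₁ μbar (by infer_instance)) (h1 μ (by infer_instance))
    have hVarbar : (∫ x, ∫ y, V (x, y) ∂ν ∂μbar) = ⨅ y : Y, ∫ x, V (x, y) ∂μbar :=
      le_antisymm (aux_le_var V hV μbar ν h2) (aux_var_le V hV μbar ν)
    calc (⨅ y : Y, ∫ x, V (x, y) ∂μ') ≤ ∫ x, ∫ y, V (x, y) ∂ν ∂μ' := aux_var_le V hV μ' ν
      _ ≤ ∫ x, ∫ y, V (x, y) ∂ν ∂μ := hsaddle₁ μ' hμ'
      _ = ∫ x, ∫ y, V (x, y) ∂ν ∂μbar := hEq.symm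
      _ = ⨅ y : Y, ∫ x, V (x, y) ∂μbar := hVarbar
end

section
/- Under the hypotheses that X ⊆ M is compact, Y = conv(X) is compact, and every μ ∈ P(X) admits a barycenter, any variance-maximizing measure μ̄ ∈ P(X) satisfies W₂(δ_x, ν) = R for μ̄-almost every x, where ν is any circumcenter of i(X) in Wasserstein space and R is the circumradius of i(X). -/
open MeasureTheory

/-- `W₂²(δ_x, ν) = ∫ d²(x,y) dν(y)`, as an extended nonnegative real. -/
noncomputable def w2sq {M : Type*} [MetricSpace M] [MeasurableSpace M]
    (x : M) (ν : Measure M) : ENNReal :=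
  ∫⁻ y, ENNReal.ofReal (dist x y ^ 2) ∂ν

/-- The variance of `μ`: the infimum over `y ∈ M` of `∫ d²(x,y) dμ(x)`. -/
noncomputable def varE {M : Type*} [MetricSpace M] [MeasurableSpace M]
    (μ : Measure M) : ENNReal :=
  ⨅ y : M, ∫⁻ x, ENNReal.ofReal (dist x y ^ 2) ∂μ

section Aux

open Finset

/-- Finite von Neumann minimax (one-sided form), proved via Hahn–Banach separation. -/
lemma my_minimax {ι κ : Type*} [Fintype ι] [Fintype κ] [Nonempty ι] [Nonempty κ]
    [DecidableEq ι] [DecidableEq κ]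
    (A : ι → κ → ℝ) (V : ℝ)
    (hV : ∀ q ∈ stdSimplex ℝ ι, ∃ j, ∑ i, q i * A i j ≤ V) :
    ∃ p ∈ stdSimplex ℝ κ, ∀ i, ∑ j, p j * A i j ≤ V := by
  by_contra hcon
  push_neg at hcon
  have vertex_mem : ∀ j : κ, (Pi.single j 1 : κ → ℝ) ∈ stdSimplex ℝ κ := by
    intro j
    constructor
    · intro k
      rcases eq_or_ne k j with rfl | h
      · simp
      · simp [Pi.single_apply, h]
    · simp
  set l : (κ → ℝ) → (ι → ℝ) := fun p i => ∑ j, p j * A i j with hl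
  have hl_lin : IsLinearMap ℝ l := by
    constructor
    · intro p p'; funext i; simp [l, add_mul, Finset.sum_add_distrib]
    · intro c p; funext i
      simp [l, Finset.mul_sum, mul_assoc]
  have hl_cont : Continuous l := by
    apply continuous_pi
    intro i
    exact continuous_finset_sum _ fun j _ => (continuous_apply j).mul continuous_const
  set C : Set (ι → ℝ) := l '' stdSimplex ℝ κ with hC
  set K : Set (ι → ℝ) := {y | ∀ i, y i ≤ V} with hK
  have hC_cpt : IsCompact C := (isCompact_stdSimplex ℝ κ).image hl_cont
  have hC_conv : Convex ℝ C := (convex_stdSimplex ℝ κ).is_linear_image hl_lin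
  have hK_conv : Convex ℝ K := by
    intro y hy z hz a b ha hb hab
    intro i
    have := hy i; have := hz i
    calc a * y i + b * z i ≤ a * V + b * V := by gcongr
      _ = V := by rw [← add_mul, hab, one_mul]
  have hK_closed : IsClosed K := by
    have : K = ⋂ i, {y : ι → ℝ | y i ≤ V} := by
      ext y; simp [K, Set.mem_iInter]
    rw [this]
    exact isClosed_iInter fun i => isClosed_le (continuous_apply i) continuous_const
  have disj : Disjoint C K := by
    rw [Set.disjoint_left]
    rintro y ⟨p, hp, rfl⟩ hyK
    obtain ⟨i, hi⟩ := hcon p hp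
    exact absurd (hyK i) (not_le.2 hi)
  obtain ⟨f, u, v, hfC, huv, hfK⟩ :=
    geometric_hahn_banach_compact_closed hC_conv hC_cpt hK_conv hK_closed disj
  set q : ι → ℝ := fun i => -f (Pi.single i 1) with hq
  have hf_repr : ∀ y : ι → ℝ, f y = -∑ i, y i * q i := by
    intro y
    have hsingle : ∀ i, y i • (Pi.single i 1 : ι → ℝ) = Pi.single i (y i) := fun i => by
      rw [← Pi.single_smul]; simp
    have hy : ∑ i, y i • (Pi.single i 1 : ι → ℝ) = y := by
      simp_rw [hsingle]; exact Finset.univ_sum_single y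
    calc f y = f (∑ i, y i • (Pi.single i 1 : ι → ℝ)) := by rw [hy]
      _ = ∑ i, y i * f (Pi.single i 1) := by rw [map_sum]; simp
      _ = -∑ i, y i * q i := by simp [hq, mul_neg]
  have hKmem : ∀ (t : ℝ) (i : ι), 0 ≤ t → ((fun _ => V) - t • (Pi.single i 1 : ι → ℝ)) ∈ K := by
    intro t i ht j
    simp only [Pi.sub_apply, Pi.smul_apply, smul_eq_mul]
    have : 0 ≤ t * (Pi.single i 1 : ι → ℝ) j := by
      apply mul_nonneg ht
      rcases eq_or_ne j i with rfl | h
      · simp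
      · simp [Pi.single_apply, h]
    linarith
  have hq_nonneg : ∀ i, 0 ≤ q i := by
    intro i
    by_contra h
    push_neg at h
    have hc : 0 < f (Pi.single i 1) := by
      simp only [hq, neg_neg] at h; linarith [neg_neg (f (Pi.single i 1))]
    set c := f (Pi.single i 1)
    set t : ℝ := max 0 ((f (fun _ => V) - v + 1) / c) with htdef
    have ht0 : 0 ≤ t := le_max_left _ _
    have hmem := hKmem t i ht0
    have := hfK _ hmem
    rw [map_sub, _root_.map_smul] at this
    have htc : f (fun _ => V) - v + 1 ≤ t * c := by
      have h1 : (f (fun _ => V) - v + 1) / c ≤ t := le_max_right _ _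
      calc f (fun _ => V) - v + 1 = ((f (fun _ => V) - v + 1) / c) * c := by
            field_simp
        _ ≤ t * c := by gcongr
    simp only [smul_eq_mul] at this
    linarith
  have hS : 0 < ∑ i, q i := by
    rcases (Finset.sum_nonneg fun i _ => hq_nonneg i).lt_or_eq with h | h
    · exact h
    · exfalso
      have hall : ∀ i ∈ Finset.univ, q i = 0 :=
        (Finset.sum_eq_zero_iff_of_nonneg fun i _ => hq_nonneg i).1 h.symm
      have hf0 : ∀ y, f y = 0 := by
        intro y
        rw [hf_repr]
        rw [Finset.sum_eq_zero]
        · ring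
        · intro i _; rw [hall i (Finset.mem_univ i)]; ring
      obtain ⟨j0⟩ := (inferInstance : Nonempty κ)
      have h1 := hfC _ ⟨_, vertex_mem j0, rfl⟩
      have h2 := hfK (fun _ => V) (fun i => le_refl V)
      rw [hf0] at h1 h2
      linarith
  set S := ∑ i, q i
  set q' : ι → ℝ := fun i => q i / S with hq'def
  have hq' : q' ∈ stdSimplex ℝ ι := by
    constructor
    · intro i; exact div_nonneg (hq_nonneg i) hS.le
    · rw [← Finset.sum_div, div_self hS.ne']
  obtain ⟨j, hj⟩ := hV q' hq'
  have h1 := hfC _ ⟨_, vertex_mem j, rfl⟩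
  have h2 := hfK (fun _ => V) (fun i => le_refl V)
  have hlj : l (Pi.single j 1) = fun i => A i j := by
    funext i
    simp [l, Pi.single_apply, Finset.sum_ite_eq']
  rw [hlj, hf_repr] at h1
  rw [hf_repr] at h2
  have hVS : ∑ i, V * q i = V * S := by rw [← Finset.mul_sum]
  rw [hVS] at h2
  have key : V * S < ∑ i, A i j * q i := by linarith
  have hrw : ∑ i, q' i * A i j = (∑ i, A i j * q i) / S := by
    rw [Finset.sum_div]
    refine Finset.sum_congr rfl fun i _ => ?_
    rw [hq'def]; ring
  rw [hrw] at hj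
  have : ∑ i, A i j * q i ≤ V * S := by
    calc ∑ i, A i j * q i = ((∑ i, A i j * q i) / S) * S := by field_simp
      _ ≤ V * S := by gcongr
  linarith

/-- Weighted quadratic Minkowski-type bound. -/
lemma my_weighted_bound {κ : Type*} [Fintype κ] (p a b : κ → ℝ) (ε : ℝ)
    (hp : ∀ j, 0 ≤ p j) (hsum : ∑ j, p j = 1) (ha : ∀ j, 0 ≤ a j) (hb : ∀ j, 0 ≤ b j)
    (hab : ∀ j, a j ≤ b j + ε) (hε : 0 ≤ ε) :
    ∑ j, p j * a j ^ 2 ≤ (Real.sqrt (∑ j, p j * b j ^ 2) + ε) ^ 2 := by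
  set S := ∑ j, p j * b j ^ 2 with hSdef
  have hS0 : 0 ≤ S := Finset.sum_nonneg fun j _ => mul_nonneg (hp j) (sq_nonneg _)
  have hCS : ∑ j, p j * b j ≤ Real.sqrt S := by
    rw [Real.le_sqrt (Finset.sum_nonneg fun j _ => mul_nonneg (hp j) (hb j)) hS0]
    have h := Finset.sum_mul_sq_le_sq_mul_sq Finset.univ (fun j => Real.sqrt (p j))
      (fun j => Real.sqrt (p j) * b j)
    have e1 : ∀ j, Real.sqrt (p j) * (Real.sqrt (p j) * b j) = p j * b j := fun j => by
      rw [← mul_assoc, Real.mul_self_sqrt (hp j)]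
    have e2 : ∀ j, Real.sqrt (p j) ^ 2 = p j := fun j => Real.sq_sqrt (hp j)
    have e3 : ∀ j, (Real.sqrt (p j) * b j) ^ 2 = p j * b j ^ 2 := fun j => by
      rw [mul_pow, e2 j]
    simp_rw [e1, e2, e3] at h
    rw [hsum, one_mul] at h
    exact h
  have expand : ∑ j, p j * (b j + ε) ^ 2 = S + 2 * ε * (∑ j, p j * b j) + ε ^ 2 := by
    have e : ∀ j, p j * (b j + ε) ^ 2 = p j * b j ^ 2 + 2 * ε * (p j * b j) + ε ^ 2 * p j :=
      fun j => by ring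
    simp_rw [e, Finset.sum_add_distrib, ← Finset.mul_sum, hsum]
    ring
  calc ∑ j, p j * a j ^ 2 ≤ ∑ j, p j * (b j + ε) ^ 2 := by
        refine Finset.sum_le_sum fun j _ => ?_
        have h1 : a j ^ 2 ≤ (b j + ε) ^ 2 := by nlinarith [hab j, ha j, hb j]
        exact mul_le_mul_of_nonneg_left h1 (hp j)
    _ = S + 2 * ε * (∑ j, p j * b j) + ε ^ 2 := expand
    _ ≤ S + 2 * ε * Real.sqrt S + ε ^ 2 := by
        have := mul_le_mul_of_nonneg_left hCS (by linarith : (0:ℝ) ≤ 2 * ε)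
        linarith
    _ = (Real.sqrt S + ε) ^ 2 := by
        have h : (Real.sqrt S + ε) ^ 2 = Real.sqrt S ^ 2 + 2 * ε * Real.sqrt S + ε ^ 2 := by ring
        rw [h, Real.sq_sqrt hS0]

variable {M : Type*} [MetricSpace M] [MeasurableSpace M] [BorelSpace M]

/-- Finitely supported measure with weights `p` at points `y`. -/
noncomputable def discMeas {κ : Type*} [Fintype κ] (p : κ → ℝ) (y : κ → M) : Measure M :=
  ∑ j, ENNReal.ofReal (p j) • Measure.dirac (y j)

omit [MetricSpace M] [BorelSpace M] in
lemma discMeas_prob {κ : Type*} [Fintype κ] (p : κ → ℝ) (y : κ → M)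
    (hp : ∀ j, 0 ≤ p j) (hsum : ∑ j, p j = 1) : IsProbabilityMeasure (discMeas p y) := by
  constructor
  rw [discMeas, Measure.finset_sum_apply]
  simp only [Measure.smul_apply, measure_univ, smul_eq_mul, mul_one]
  rw [← ENNReal.ofReal_sum_of_nonneg fun j _ => hp j, hsum, ENNReal.ofReal_one]

omit [MetricSpace M] [BorelSpace M] in
lemma discMeas_null {κ : Type*} [Fintype κ] (p : κ → ℝ) (y : κ → M) {s : Set M}
    (hs : MeasurableSet s) (hy : ∀ j, y j ∉ s) : discMeas p y s = 0 := by
  rw [discMeas, Measure.finset_sum_apply]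
  refine Finset.sum_eq_zero fun j _ => ?_
  simp only [Measure.smul_apply, smul_eq_mul]
  rw [Measure.dirac_apply' _ hs, Set.indicator_of_notMem (hy j)]
  simp

omit [MetricSpace M] [BorelSpace M] in
lemma discMeas_lintegral {κ : Type*} [Fintype κ] (p : κ → ℝ) (y : κ → M)
    {f : M → ENNReal} (hf : Measurable f) :
    ∫⁻ x, f x ∂(discMeas p y) = ∑ j, ENNReal.ofReal (p j) * f (y j) := by
  rw [discMeas, lintegral_finset_sum_measure]
  refine Finset.sum_congr rfl fun j _ => ?_
  rw [lintegral_smul_measure, lintegral_dirac' _ hf, smul_eq_mul]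

lemma discMeas_integral {κ : Type*} [Fintype κ] (p : κ → ℝ) (y : κ → M)
    (hp : ∀ j, 0 ≤ p j) {f : M → ℝ} (hf : Continuous f) :
    ∫ x, f x ∂(discMeas p y) = ∑ j, p j * f (y j) := by
  rw [discMeas, integral_finset_sum_measure]
  · refine Finset.sum_congr rfl fun j _ => ?_
    rw [integral_smul_measure, integral_dirac]
    rw [ENNReal.toReal_ofReal (hp j), smul_eq_mul]
  · intro j _
    refine Integrable.smul_measure ?_ ENNReal.ofReal_ne_top
    refine (integrable_const (f (y j))).congr ?_
    rw [MeasureTheory.ae_dirac_eq]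
    exact Filter.eventually_pure.2 rfl

lemma ofReal_sq_rpow_half {c : ℝ} (hc : 0 ≤ c) :
    ENNReal.ofReal (c ^ 2) ^ (1/2 : ℝ) = ENNReal.ofReal c := by
  rw [sq, ENNReal.ofReal_mul hc, ← sq, ← ENNReal.rpow_natCast (ENNReal.ofReal c) 2,
    ← ENNReal.rpow_mul]
  norm_num

lemma ofReal_rpow_two {c : ℝ} (hc : 0 ≤ c) :
    ENNReal.ofReal c ^ (2 : ℝ) = ENNReal.ofReal (c ^ 2) := by
  rw [show ((2:ℝ)) = ((2:ℕ):ℝ) from by norm_num, ENNReal.rpow_natCast, sq, sq,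
    ENNReal.ofReal_mul hc]

/-- A jointly measurable kernel agreeing with the squared distance on `X × M`. -/
lemma exists_kernel (X : Set M) (hX : IsCompact X) (hXne : X.Nonempty) :
    ∃ h : M × M → ENNReal, Measurable h ∧
      ∀ x ∈ X, ∀ y : M, h (x, y) = ENNReal.ofReal (dist x y ^ 2) := by
  obtain ⟨c, hc_count, hc_sub⟩ := hX.isSeparable
  have hcne : c.Nonempty := by
    rcases c.eq_empty_or_nonempty with rfl | h
    · exfalso
      rw [closure_empty, Set.subset_empty_iff] at hc_sub
      exact hXne.ne_empty hc_sub
    · exact h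
  haveI := hc_count.to_subtype
  haveI : Nonempty c := hcne.to_subtype
  refine ⟨fun z => ⨅ k : c, ENNReal.ofReal ((dist z.1 (k:M) + dist (k:M) z.2) ^ 2), ?_, ?_⟩
  · refine Measurable.iInf fun k => ?_
    have m1 : Measurable fun z : M × M => dist z.1 (k:M) :=
      ((continuous_id.dist continuous_const).measurable).comp measurable_fst
    have m2 : Measurable fun z : M × M => dist (k:M) z.2 :=
      ((continuous_const.dist continuous_id).measurable).comp measurable_snd
    exact ENNReal.measurable_ofReal.comp ((m1.add m2).pow_const 2)
  · intro x hx y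
    refine le_antisymm ?_ (le_iInf fun k => ?_)
    · refine ENNReal.le_of_forall_pos_le_add fun η hη _ => ?_
      set d := dist x y with hd
      have hd0 : 0 ≤ d := dist_nonneg
      set δ := min 1 ((η:ℝ) / (4*(d+1))) with hδ
      have hδ0 : 0 < δ := lt_min one_pos (by positivity)
      obtain ⟨k, hkc, hk⟩ := Metric.mem_closure_iff.1 (hc_sub hx) δ hδ0
      have hterm : (⨅ k : c, ENNReal.ofReal ((dist x (k:M) + dist (k:M) y) ^ 2))
          ≤ ENNReal.ofReal ((dist x k + dist k y) ^ 2) := iInf_le _ (⟨k, hkc⟩ : c)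
      have hky : dist k y ≤ δ + d := by
        have h3 := dist_triangle k x y
        rw [dist_comm k x] at h3
        linarith [hk.le]
      have hbound : (dist x k + dist k y) ^ 2 ≤ d ^ 2 + (η:ℝ) := by
        have h1 : dist x k + dist k y ≤ d + 2*δ := by linarith [hk.le]
        have h2 : (dist x k + dist k y) ^ 2 ≤ (d + 2*δ) ^ 2 := by
          nlinarith [dist_nonneg (x := x) (y := k), dist_nonneg (x := k) (y := y)]
        have hδ1 : δ ≤ 1 := min_le_left _ _
        have hδ2 : δ ≤ (η:ℝ)/(4*(d+1)) := min_le_right _ _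
        have h3 : δ * (4*(d+1)) ≤ (η:ℝ) := (le_div_iff₀ (by positivity)).1 hδ2
        nlinarith [hδ0.le, hδ1]
      calc (⨅ k : c, ENNReal.ofReal ((dist x (k:M) + dist (k:M) y) ^ 2))
          ≤ ENNReal.ofReal ((dist x k + dist k y) ^ 2) := hterm
        _ ≤ ENNReal.ofReal (d ^ 2 + (η:ℝ)) := ENNReal.ofReal_le_ofReal hbound
        _ ≤ ENNReal.ofReal (d ^ 2) + (η : ENNReal) := by
            rw [ENNReal.ofReal_add (sq_nonneg d) η.coe_nonneg, ENNReal.ofReal_coe_nnreal]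
        _ = ENNReal.ofReal (dist x y ^ 2) + (η : ENNReal) := by rw [hd]
    · refine ENNReal.ofReal_le_ofReal ?_
      have h1 := dist_triangle x (k:M) y
      nlinarith [dist_nonneg (x := x) (y := y), dist_nonneg (x := x) (y := (k:M)),
        dist_nonneg (x := (k:M)) (y := y)]

end Aux

/-- Any variance-maximizing `μbar ∈ P(X)` concentrates on the sphere `W₂(δ_x, ν) = R`,
where `ν` is any circumcenter of `i(X)` in Wasserstein space and `R` its circumradius. -/
theorem varianceMaximizer_concentrates_on_sphere {M : Type*}
    [MetricSpace M] [CompleteSpace M] [MeasurableSpace M] [BorelSpace M]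
    (X : Set M) (hX : IsCompact X) (hXne : X.Nonempty)
    (hconv : IsCompact {y : M | ∃ μ : Measure M, IsProbabilityMeasure μ ∧ μ Xᶜ = 0 ∧
      ∀ z : M, (∫ x, dist x y ^ 2 ∂μ) ≤ ∫ x, dist x z ^ 2 ∂μ})
    (hbary : ∀ μ : Measure M, IsProbabilityMeasure μ → μ Xᶜ = 0 →
      ∃ y : M, ∀ z : M, (∫ x, dist x y ^ 2 ∂μ) ≤ ∫ x, dist x z ^ 2 ∂μ)
    -- `ν` is a circumcenter of `i(X)` in `(P(M), W₂)`:
    (ν : Measure M) (hν : IsProbabilityMeasure ν)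
    (hcenter : (⨆ x ∈ X, w2sq x ν ^ (1/2 : ℝ)) =
      ⨅ ν' : {ν' : Measure M // IsProbabilityMeasure ν'}, ⨆ x ∈ X, w2sq x ν'.1 ^ (1/2 : ℝ))
    -- `μbar` is variance maximizing over `P(X)`:
    (μbar : Measure M) (hμbar : IsProbabilityMeasure μbar) (hμbarX : μbar Xᶜ = 0)
    (hmax : ∀ μ' : Measure M, IsProbabilityMeasure μ' → μ' Xᶜ = 0 → varE μ' ≤ varE μbar) :
    ∀ᵐ x ∂μbar, w2sq x ν ^ (1/2 : ℝ) =
      ⨅ ν' : {ν' : Measure M // IsProbabilityMeasure ν'}, ⨆ x ∈ X, w2sq x ν'.1 ^ (1/2 : ℝ) := by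
  classical
  set R : ENNReal :=
    ⨅ ν' : {ν' : Measure M // IsProbabilityMeasure ν'}, ⨆ x ∈ X, w2sq x ν'.1 ^ (1/2 : ℝ)
    with hRdef
  obtain ⟨x₀, hx₀⟩ := hXne
  have hXmeas : MeasurableSet X := hX.isClosed.measurableSet
  obtain ⟨D, hD⟩ : ∃ D : ℝ, ∀ x ∈ X, dist x x₀ ≤ D := by
    obtain ⟨r, hr⟩ := (Metric.isBounded_iff_subset_closedBall x₀).1 hX.isBounded
    exact ⟨r, fun x hx => Metric.mem_closedBall.1 (hr hx)⟩
  have hD0 : 0 ≤ D := le_trans dist_nonneg (hD x₀ hx₀)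
  have hae_mem : ∀ᵐ x ∂μbar, x ∈ X := by
    rw [MeasureTheory.ae_iff]
    exact hμbarX
  have hVfin : varE μbar ≠ ⊤ := by
    have h1 : varE μbar ≤ ∫⁻ x, ENNReal.ofReal (dist x x₀ ^ 2) ∂μbar := iInf_le _ x₀
    have h2 : ∫⁻ x, ENNReal.ofReal (dist x x₀ ^ 2) ∂μbar ≤ ENNReal.ofReal (D ^ 2) := by
      calc ∫⁻ x, ENNReal.ofReal (dist x x₀ ^ 2) ∂μbar
          ≤ ∫⁻ _, ENNReal.ofReal (D ^ 2) ∂μbar := lintegral_mono_ae (hae_mem.mono fun x hx =>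
            ENNReal.ofReal_le_ofReal (by nlinarith [hD x hx, dist_nonneg (x := x) (y := x₀)]))
        _ = ENNReal.ofReal (D ^ 2) := by simp [lintegral_const]
    exact ne_top_of_le_ne_top ENNReal.ofReal_ne_top (h1.trans h2)
  have hRfin : R ≠ ⊤ := by
    have h1 : R ≤ ⨆ x ∈ X, w2sq x (Measure.dirac x₀) ^ (1/2 : ℝ) := by
      rw [hRdef]
      exact iInf_le _ (⟨Measure.dirac x₀, inferInstance⟩ : {ν' : Measure M // IsProbabilityMeasure ν'})
    have h2 : (⨆ x ∈ X, w2sq x (Measure.dirac x₀) ^ (1/2 : ℝ))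
        ≤ ENNReal.ofReal (D ^ 2) ^ (1/2 : ℝ) := by
      refine iSup₂_le fun x hx => ?_
      refine ENNReal.rpow_le_rpow ?_ (by norm_num)
      rw [w2sq, lintegral_dirac]
      exact ENNReal.ofReal_le_ofReal (by nlinarith [hD x hx, dist_nonneg (x := x) (y := x₀)])
    exact ne_top_of_le_ne_top
      (ENNReal.rpow_ne_top_of_nonneg (by norm_num) ENNReal.ofReal_ne_top) (h1.trans h2)
  have hR2fin : R ^ (2:ℝ) ≠ ⊤ := ENNReal.rpow_ne_top_of_nonneg (by norm_num) hRfin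
  have hpt_le : ∀ x ∈ X, w2sq x ν ≤ R ^ (2:ℝ) := by
    intro x hx
    have h1 : w2sq x ν ^ (1/2 : ℝ) ≤ R := by
      rw [← hcenter]
      exact le_iSup₂ (f := fun x (_ : x ∈ X) => w2sq x ν ^ (1/2 : ℝ)) x hx
    have h2 := ENNReal.rpow_le_rpow h1 (by norm_num : (0:ℝ) ≤ 2)
    rwa [← ENNReal.rpow_mul, show (1/2 : ℝ) * 2 = 1 from by norm_num, ENNReal.rpow_one] at h2
  -- The key lower bound: `R² ≤ varE μbar`.
  have hR2V : R ^ (2:ℝ) ≤ varE μbar := by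
    set Vt := (varE μbar).toReal with hVtdef
    have hVt0 : 0 ≤ Vt := ENNReal.toReal_nonneg
    set B : Set M := {y : M | ∃ μ : Measure M, IsProbabilityMeasure μ ∧ μ Xᶜ = 0 ∧
      ∀ z : M, (∫ x, dist x y ^ 2 ∂μ) ≤ ∫ x, dist x z ^ 2 ∂μ} with hBdef
    have key : ∀ ε : ℝ, 0 < ε → R ≤ ENNReal.ofReal (Real.sqrt Vt + 2*ε) := by
      intro ε hε
      obtain ⟨tX, htXsub, htXfin, htXcov⟩ := hX.elim_finite_subcover_image
        (fun z (_ : z ∈ X) => Metric.isOpen_ball (x := z) (ε := ε))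
        (fun x hx => Set.mem_biUnion hx (Metric.mem_ball_self hε))
      have hBne : B.Nonempty := by
        have hd : (Measure.dirac x₀) Xᶜ = 0 := by
          rw [Measure.dirac_apply' _ hXmeas.compl,
            Set.indicator_of_notMem (by simpa using hx₀)]
        obtain ⟨y0, hy0⟩ := hbary (Measure.dirac x₀) inferInstance hd
        exact ⟨y0, Measure.dirac x₀, inferInstance, hd, hy0⟩
      obtain ⟨tB, htBsub, htBfin, htBcov⟩ := hconv.elim_finite_subcover_image
        (fun z (_ : z ∈ B) => Metric.isOpen_ball (x := z) (ε := ε))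
        (fun y hy => Set.mem_biUnion hy (Metric.mem_ball_self hε))
      haveI : Fintype tX := htXfin.fintype
      haveI : Fintype tB := htBfin.fintype
      have htXne : tX.Nonempty := by
        obtain ⟨z, hz, _⟩ := Set.mem_iUnion₂.1 (htXcov hx₀); exact ⟨z, hz⟩
      have htBne : tB.Nonempty := by
        obtain ⟨b0, hb0⟩ := hBne
        obtain ⟨z, hz, _⟩ := Set.mem_iUnion₂.1 (htBcov hb0); exact ⟨z, hz⟩
      haveI : Nonempty tX := htXne.to_subtype
      haveI : Nonempty tB := htBne.to_subtype
      set A : tX → tB → ℝ := fun i j => dist (i:M) (j:M) ^ 2 with hA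
      have hVle : ∀ q ∈ stdSimplex ℝ tX, ∃ j, ∑ i, q i * A i j ≤ (Real.sqrt Vt + ε)^2 := by
        intro q hq
        set μq := discMeas q (fun i : tX => (i:M)) with hμq
        haveI hqprob : IsProbabilityMeasure μq := discMeas_prob _ _ hq.1 hq.2
        have hqnull : μq Xᶜ = 0 := discMeas_null _ _ hXmeas.compl (fun i => by
          simp only [Set.mem_compl_iff, not_not]; exact htXsub i.2)
        obtain ⟨ys, hys⟩ := hbary μq hqprob hqnull
        have hysB : ys ∈ B := ⟨μq, hqprob, hqnull, hys⟩
        obtain ⟨z, hz, hzball⟩ := Set.mem_iUnion₂.1 (htBcov hysB)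
        refine ⟨⟨z, hz⟩, ?_⟩
        have hzd : dist ys z < ε := Metric.mem_ball.1 hzball
        have hstep1 : ∑ i, q i * dist (i:M) z ^ 2
            ≤ (Real.sqrt (∑ i, q i * dist (i:M) ys ^ 2) + ε) ^ 2 :=
          my_weighted_bound q _ _ ε hq.1 hq.2 (fun i => dist_nonneg) (fun i => dist_nonneg)
            (fun i => by
              have h3 := dist_triangle (i:M) ys z
              linarith) hε.le
        have hbnd : ∑ i, q i * dist (i:M) ys ^ 2 ≤ Vt := by
          have hmeasf : ∀ z : M, Measurable fun x : M => ENNReal.ofReal (dist x z ^ 2) :=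
            fun z => (ENNReal.continuous_ofReal.comp
              ((continuous_id.dist continuous_const).pow 2)).measurable
          have hofr : ∀ z : M, ∫⁻ x, ENNReal.ofReal (dist x z ^ 2) ∂μq
              = ENNReal.ofReal (∑ i, q i * dist (i:M) z ^ 2) := by
            intro z
            calc ∫⁻ x, ENNReal.ofReal (dist x z ^ 2) ∂μq
                = ∑ i, ENNReal.ofReal (q i) * ENNReal.ofReal (dist (i:M) z ^ 2) := by
                  rw [hμq, discMeas_lintegral _ _ (hmeasf z)]
              _ = ∑ i, ENNReal.ofReal (q i * dist (i:M) z ^ 2) :=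
                  Finset.sum_congr rfl fun i _ => (ENNReal.ofReal_mul (hq.1 i)).symm
              _ = ENNReal.ofReal (∑ i, q i * dist (i:M) z ^ 2) :=
                  (ENNReal.ofReal_sum_of_nonneg
                    (fun i _ => mul_nonneg (hq.1 i) (sq_nonneg _))).symm
          have hint : ∀ z : M, ∫ x, dist x z ^ 2 ∂μq = ∑ i, q i * dist (i:M) z ^ 2 := fun z =>
            discMeas_integral _ _ hq.1 ((continuous_id.dist continuous_const).pow 2)
          have h1 : ENNReal.ofReal (∑ i, q i * dist (i:M) ys ^ 2) ≤ varE μq := by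
            refine le_iInf fun z => ?_
            rw [hofr z]
            apply ENNReal.ofReal_le_ofReal
            have h6 := hys z
            rw [hint ys, hint z] at h6
            exact h6
          have h2 : varE μq ≤ varE μbar := hmax μq hqprob hqnull
          have h7 := h1.trans h2
          rwa [ENNReal.ofReal_le_iff_le_toReal hVfin] at h7
        have hsq : Real.sqrt (∑ i, q i * dist (i:M) ys ^ 2) ≤ Real.sqrt Vt :=
          Real.sqrt_le_sqrt hbnd
        have h8 : (Real.sqrt (∑ i, q i * dist (i:M) ys ^ 2) + ε) ^ 2
            ≤ (Real.sqrt Vt + ε) ^ 2 := by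
          nlinarith [Real.sqrt_nonneg (∑ i, q i * dist (i:M) ys ^ 2)]
        simpa [hA] using hstep1.trans h8
      obtain ⟨p, hp, hpbound⟩ := my_minimax A ((Real.sqrt Vt + ε)^2) hVle
      set ν' := discMeas p (fun j : tB => (j:M)) with hν'
      haveI hν'prob : IsProbabilityMeasure ν' := discMeas_prob _ _ hp.1 hp.2
      have hR1 : R ≤ ⨆ x ∈ X, w2sq x ν' ^ (1/2 : ℝ) := by
        rw [hRdef]
        exact iInf_le _ (⟨ν', hν'prob⟩ : {ν'' : Measure M // IsProbabilityMeasure ν''})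
      have hR2 : (⨆ x ∈ X, w2sq x ν' ^ (1/2 : ℝ)) ≤ ENNReal.ofReal (Real.sqrt Vt + 2*ε) := by
        refine iSup₂_le fun x hx => ?_
        obtain ⟨z, hz, hzball⟩ := Set.mem_iUnion₂.1 (htXcov hx)
        have hxz : dist x z < ε := Metric.mem_ball.1 hzball
        have hw : w2sq x ν' = ENNReal.ofReal (∑ j, p j * dist x (j:M) ^ 2) := by
          calc w2sq x ν'
              = ∑ j, ENNReal.ofReal (p j) * ENNReal.ofReal (dist x (j:M) ^ 2) := by
                have hm : Measurable fun y : M => ENNReal.ofReal (dist x y ^ 2) := by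
                  exact (ENNReal.continuous_ofReal.comp
                    ((continuous_const.dist continuous_id).pow 2)).measurable
                rw [w2sq, hν', discMeas_lintegral _ _ hm]
            _ = ∑ j, ENNReal.ofReal (p j * dist x (j:M) ^ 2) :=
                Finset.sum_congr rfl fun j _ => (ENNReal.ofReal_mul (hp.1 j)).symm
            _ = ENNReal.ofReal (∑ j, p j * dist x (j:M) ^ 2) :=
                (ENNReal.ofReal_sum_of_nonneg
                  (fun j _ => mul_nonneg (hp.1 j) (sq_nonneg _))).symm
        have hb1 : ∑ j, p j * dist x (j:M) ^ 2
            ≤ (Real.sqrt (∑ j, p j * dist (z:M) (j:M) ^ 2) + ε) ^ 2 :=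
          my_weighted_bound p _ _ ε hp.1 hp.2 (fun j => dist_nonneg) (fun j => dist_nonneg)
            (fun j => by
              have h3 := dist_triangle x z (j:M)
              linarith) hε.le
        have hb2 : Real.sqrt (∑ j, p j * dist (z:M) (j:M) ^ 2) ≤ Real.sqrt Vt + ε := by
          have h9 := hpbound ⟨z, hz⟩
          have h4 : Real.sqrt (∑ j, p j * dist (z:M) (j:M) ^ 2)
              ≤ Real.sqrt ((Real.sqrt Vt + ε) ^ 2) := Real.sqrt_le_sqrt (by simpa [hA] using h9)
          rwa [Real.sqrt_sq (by positivity)] at h4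
        have hb3 : ∑ j, p j * dist x (j:M) ^ 2 ≤ (Real.sqrt Vt + 2*ε) ^ 2 := by
          nlinarith [Real.sqrt_nonneg (∑ j, p j * dist (z:M) (j:M) ^ 2)]
        rw [hw]
        calc ENNReal.ofReal (∑ j, p j * dist x (j:M) ^ 2) ^ (1/2 : ℝ)
            ≤ ENNReal.ofReal ((Real.sqrt Vt + 2*ε) ^ 2) ^ (1/2 : ℝ) :=
              ENNReal.rpow_le_rpow (ENNReal.ofReal_le_ofReal hb3) (by norm_num)
          _ = ENNReal.ofReal (Real.sqrt Vt + 2*ε) := ofReal_sq_rpow_half (by positivity)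
      exact hR1.trans hR2
    have hRs : R ≤ ENNReal.ofReal (Real.sqrt Vt) := by
      refine ENNReal.le_of_forall_pos_le_add fun η hη _ => ?_
      have h10 := key ((η:ℝ)/2) (by positivity)
      have h11 : Real.sqrt Vt + 2*((η:ℝ)/2) = Real.sqrt Vt + (η:ℝ) := by ring
      rw [h11, ENNReal.ofReal_add (Real.sqrt_nonneg _) η.coe_nonneg,
        ENNReal.ofReal_coe_nnreal] at h10
      exact h10
    have h5 := ENNReal.rpow_le_rpow hRs (by norm_num : (0:ℝ) ≤ 2)
    calc R ^ (2:ℝ) ≤ ENNReal.ofReal (Real.sqrt Vt) ^ (2:ℝ) := h5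
      _ = ENNReal.ofReal (Real.sqrt Vt ^ 2) := ofReal_rpow_two (Real.sqrt_nonneg _)
      _ = ENNReal.ofReal Vt := by rw [Real.sq_sqrt hVt0]
      _ = varE μbar := ENNReal.ofReal_toReal hVfin
  -- Fubini-type lower bound for `∫ W' dμbar`.
  obtain ⟨h, hmeas, hheq⟩ := exists_kernel X hX ⟨x₀, hx₀⟩
  set W' : M → ENNReal := fun x => ∫⁻ y, h (x, y) ∂ν with hW'def
  have hW'meas : Measurable W' := Measurable.lintegral_prod_right' hmeas
  have hW'eq : ∀ x ∈ X, W' x = w2sq x ν := by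
    intro x hx
    rw [hW'def, w2sq]
    exact lintegral_congr fun y => hheq x hx y
  have hswap : ∫⁻ x, W' x ∂μbar = ∫⁻ y, ∫⁻ x, h (x, y) ∂μbar ∂ν :=
    lintegral_lintegral_swap hmeas.aemeasurable
  have hlow : varE μbar ≤ ∫⁻ x, W' x ∂μbar := by
    rw [hswap]
    have hy : ∀ y : M, varE μbar ≤ ∫⁻ x, h (x, y) ∂μbar := by
      intro y
      have he : ∫⁻ x, h (x, y) ∂μbar = ∫⁻ x, ENNReal.ofReal (dist x y ^ 2) ∂μbar :=
        lintegral_congr_ae (hae_mem.mono fun x hx => hheq x hx y)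
      rw [he]
      exact iInf_le _ y
    calc varE μbar = ∫⁻ _, varE μbar ∂ν := by simp [lintegral_const]
      _ ≤ ∫⁻ y, ∫⁻ x, h (x, y) ∂μbar ∂ν := lintegral_mono hy
  have haeub : ∀ᵐ x ∂μbar, W' x ≤ R ^ (2:ℝ) :=
    hae_mem.mono fun x hx => (hW'eq x hx) ▸ hpt_le x hx
  have hub : ∫⁻ x, W' x ∂μbar ≤ R ^ (2:ℝ) := by
    calc ∫⁻ x, W' x ∂μbar ≤ ∫⁻ _, R ^ (2:ℝ) ∂μbar := lintegral_mono_ae haeub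
      _ = R ^ (2:ℝ) := by simp [lintegral_const]
  have hWint : ∫⁻ x, W' x ∂μbar = R ^ (2:ℝ) := le_antisymm hub (hR2V.trans hlow)
  have hsub : ∫⁻ x, (R ^ (2:ℝ) - W' x) ∂μbar = 0 := by
    rw [lintegral_sub hW'meas (by rw [hWint]; exact hR2fin) haeub, hWint]
    simp [lintegral_const]
  have hzero : ∀ᵐ x ∂μbar, R ^ (2:ℝ) - W' x = 0 :=
    (lintegral_eq_zero_iff (measurable_const.sub hW'meas)).1 hsub
  filter_upwards [hae_mem, hzero, haeub] with x hx h0 hub'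
  have hWx : W' x = R ^ (2:ℝ) := le_antisymm hub' (tsub_eq_zero_iff_le.1 h0)
  have hwx : w2sq x ν = R ^ (2:ℝ) := (hW'eq x hx).symm.trans hWx
  rw [hwx, ← ENNReal.rpow_mul, show (2:ℝ) * (1/2) = 1 from by norm_num, ENNReal.rpow_one]
end

section
/- Let X ⊆ M be compact with conv(X) compact and all barycenters existing, and suppose at least one variance-maximizing probability measure μ ∈ P(X) has a unique barycenter. Then the circumradius of X in M equals the circumradius of i(X) = {δ_x : x ∈ X} in the Wasserstein space (P(M), W₂). -/
open MeasureTheory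

lemma aux_sq_rpow_half (a : ENNReal) : (a ^ (2:ℕ)) ^ (1/2 : ℝ) = a := by
  rw [← ENNReal.rpow_natCast a 2, ← ENNReal.rpow_mul]; norm_num

lemma aux_rpow_half_sq (a : ENNReal) : (a ^ (1/2 : ℝ)) ^ (2:ℕ) = a := by
  rw [← ENNReal.rpow_natCast _ 2, ← ENNReal.rpow_mul]; norm_num

lemma aux_integrable_s10 {M : Type*} [MetricSpace M] [MeasurableSpace M] [BorelSpace M]
    {X : Set M} (hXb : Bornology.IsBounded X) {ρ : Measure M} [IsFiniteMeasure ρ]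
    (hρX : ρ Xᶜ = 0) (z : M) : Integrable (fun x => dist x z ^ 2) ρ := by
  obtain ⟨r, hr⟩ := hXb.subset_closedBall z
  have hmem : ∀ᵐ x ∂ρ, x ∈ X := by rw [MeasureTheory.ae_iff]; exact hρX
  refine (integrable_const ((max r 0) ^ 2)).mono' ?_ ?_
  · exact ((continuous_id.dist continuous_const).pow 2).aestronglyMeasurable
  · filter_upwards [hmem] with x hx
    rw [Real.norm_of_nonneg (sq_nonneg _)]
    have : dist x z ≤ max r 0 :=
      le_trans (by simpa [Metric.mem_closedBall] using hr hx) (le_max_left _ _)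
    exact pow_le_pow_left₀ dist_nonneg this 2

lemma aux_lintegral_eq {M : Type*} [MetricSpace M] [MeasurableSpace M] [BorelSpace M]
    {X : Set M} (hXb : Bornology.IsBounded X) {ρ : Measure M} [IsFiniteMeasure ρ]
    (hρX : ρ Xᶜ = 0) (z : M) :
    ∫⁻ x, ENNReal.ofReal (dist x z ^ 2) ∂ρ = ENNReal.ofReal (∫ x, dist x z ^ 2 ∂ρ) :=
  (ofReal_integral_eq_lintegral_ofReal (aux_integrable_s10 hXb hρX z)
    (Filter.Eventually.of_forall fun x => sq_nonneg _)).symm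

/-- If some variance-maximizing measure on `X` has a unique barycenter, the circumradius
of `X` in `M` equals the circumradius of `i(X) = {δ_x : x ∈ X}` in `(P(M), W₂)`. -/
theorem circumradius_eq_wassersteinCircumradius {M : Type*}
    [MetricSpace M] [CompleteSpace M] [MeasurableSpace M] [BorelSpace M]
    (X : Set M) (hX : IsCompact X) (hXne : X.Nonempty)
    (hconv : IsCompact {y : M | ∃ μ : Measure M, IsProbabilityMeasure μ ∧ μ Xᶜ = 0 ∧
      ∀ z : M, (∫ x, dist x y ^ 2 ∂μ) ≤ ∫ x, dist x z ^ 2 ∂μ})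
    (hbary : ∀ μ : Measure M, IsProbabilityMeasure μ → μ Xᶜ = 0 →
      ∃ y : M, ∀ z : M, (∫ x, dist x y ^ 2 ∂μ) ≤ ∫ x, dist x z ^ 2 ∂μ)
    -- some variance maximizing measure has a unique barycenter:
    (huniq : ∃ μ : Measure M, IsProbabilityMeasure μ ∧ μ Xᶜ = 0 ∧
      (∀ μ' : Measure M, IsProbabilityMeasure μ' → μ' Xᶜ = 0 → varE μ' ≤ varE μ) ∧
      (∃! y : M, ∀ z : M, (∫ x, dist x y ^ 2 ∂μ) ≤ ∫ x, dist x z ^ 2 ∂μ)) :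
    (⨅ y : M, ⨆ x ∈ X, ENNReal.ofReal (dist x y)) =
      ⨅ ν : {ν : Measure M // IsProbabilityMeasure ν}, ⨆ x ∈ X, w2sq x ν.1 ^ (1/2 : ℝ) := by
  classical
  obtain ⟨μ, hμP, hμX, hmax, ystar, hystar, huy⟩ := huniq
  haveI := hμP
  have hXb : Bornology.IsBounded X := hX.isBounded
  have hXmeas : MeasurableSet X := hX.isClosed.measurableSet
  set I : M → ℝ := fun z => ∫ x, dist x z ^ 2 ∂μ with hIdef
  have hInonneg : ∀ z, 0 ≤ I z := fun z => integral_nonneg fun x => sq_nonneg _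
  have hμmem : ∀ᵐ x ∂μ, x ∈ X := by rw [MeasureTheory.ae_iff]; exact hμX
  -- varE μ = ofReal (I ystar)
  have hvarμ : varE μ = ENNReal.ofReal (I ystar) := by
    refine le_antisymm ?_ ?_
    · exact le_trans (iInf_le _ ystar) (le_of_eq (aux_lintegral_eq hXb hμX ystar))
    · refine le_iInf fun z => ?_
      rw [aux_lintegral_eq hXb hμX z]
      exact ENNReal.ofReal_le_ofReal (hystar z)
  -- KEY: every point of X is within distance √(I ystar) of ystar
  have key : ∀ x₀ ∈ X, dist x₀ ystar ^ 2 ≤ I ystar := by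
    intro x₀ hx₀
    by_contra hlt
    push_neg at hlt
    -- the perturbation parameter
    set t : ℕ → ℝ := fun n => 1 / (n + 2 : ℝ) with htdef
    have ht_pos : ∀ n, 0 < t n := fun n => by positivity
    have ht_lt : ∀ n, t n < 1 := by
      intro n
      rw [htdef]
      rw [div_lt_one (by positivity)]
      have : (0:ℝ) ≤ n := Nat.cast_nonneg n
      linarith
    have ht0 : Filter.Tendsto t Filter.atTop (nhds 0) := by
      apply squeeze_zero (fun n => (ht_pos n).le) (fun n => ?_)
        tendsto_one_div_add_atTop_nhds_zero_nat
      rw [htdef]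
      apply div_le_div_of_nonneg_left one_pos.le (by positivity)
      linarith
    -- the perturbed measures
    set ρ : ℕ → Measure M := fun n =>
      ENNReal.ofReal (1 - t n) • μ + ENNReal.ofReal (t n) • Measure.dirac x₀ with hρdef
    have hρP : ∀ n, IsProbabilityMeasure (ρ n) := by
      intro n
      constructor
      simp only [hρdef, Measure.add_apply, Measure.smul_apply, smul_eq_mul,
        measure_univ, mul_one]
      rw [← ENNReal.ofReal_add (by linarith [ht_lt n]) (ht_pos n).le]
      norm_num
    have hρX : ∀ n, ρ n Xᶜ = 0 := by
      intro n
      simp only [hρdef, Measure.add_apply, Measure.smul_apply, smul_eq_mul, hμX, mul_zero,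
        zero_add]
      rw [Measure.dirac_apply' _ hXmeas.compl]
      simp [hx₀]
    haveI : ∀ n, IsProbabilityMeasure (ρ n) := hρP
    -- integrals against ρ n
    have hρint : ∀ n z, ∫ x, dist x z ^ 2 ∂(ρ n)
        = (1 - t n) * I z + t n * dist x₀ z ^ 2 := by
      intro n z
      have h1 : Integrable (fun x => dist x z ^ 2) (ENNReal.ofReal (1 - t n) • μ) :=
        (aux_integrable_s10 hXb hμX z).smul_measure ENNReal.ofReal_ne_top
      have h2 : Integrable (fun x => dist x z ^ 2)
          (ENNReal.ofReal (t n) • Measure.dirac x₀) := by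
        refine Integrable.smul_measure ?_ ENNReal.ofReal_ne_top
        exact aux_integrable_s10 hXb (by
          rw [Measure.dirac_apply' _ hXmeas.compl]; simp [hx₀]) z
      rw [hρdef]
      simp only []
      rw [integral_add_measure h1 h2, integral_smul_measure, integral_smul_measure,
        integral_dirac, ENNReal.toReal_ofReal (by linarith [ht_lt n]),
        ENNReal.toReal_ofReal (ht_pos n).le, smul_eq_mul, smul_eq_mul]
    -- barycenters of ρ n
    have hzn : ∀ n, ∃ y : M, ∀ z : M, (∫ x, dist x y ^ 2 ∂(ρ n)) ≤ ∫ x, dist x z ^ 2 ∂(ρ n) :=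
      fun n => hbary (ρ n) (hρP n) (hρX n)
    choose z hz using hzn
    have hzK : ∀ n, z n ∈ {y : M | ∃ μ : Measure M, IsProbabilityMeasure μ ∧ μ Xᶜ = 0 ∧
        ∀ w : M, (∫ x, dist x y ^ 2 ∂μ) ≤ ∫ x, dist x w ^ 2 ∂μ} :=
      fun n => ⟨ρ n, hρP n, hρX n, hz n⟩
    -- varE (ρ n) = ofReal of its minimal integral
    have hvarρ : ∀ n, varE (ρ n) = ENNReal.ofReal (∫ x, dist x (z n) ^ 2 ∂(ρ n)) := by
      intro n
      refine le_antisymm ?_ ?_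
      · exact le_trans (iInf_le _ (z n)) (le_of_eq (aux_lintegral_eq hXb (hρX n) (z n)))
      · refine le_iInf fun w => ?_
        rw [aux_lintegral_eq hXb (hρX n) w]
        exact ENNReal.ofReal_le_ofReal (hz n w)
    -- from variance maximality: d(x₀, z n)² ≤ I ystar
    have hdzn : ∀ n, dist x₀ (z n) ^ 2 ≤ I ystar := by
      intro n
      have h1 : varE (ρ n) ≤ varE μ := hmax (ρ n) (hρP n) (hρX n)
      rw [hvarρ n, hvarμ, ENNReal.ofReal_le_ofReal_iff (hInonneg ystar), hρint n (z n)] at h1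
      have h2 : I ystar ≤ I (z n) := hystar (z n)
      have h3 : (1 - t n) * I ystar + t n * dist x₀ (z n) ^ 2 ≤ I ystar := by nlinarith [ht_lt n]
      nlinarith [ht_pos n]
    -- near-minimality of z n for I
    have hzmin : ∀ n w, I (z n) ≤ I w + (t n / (1 - t n)) * dist x₀ w ^ 2 := by
      intro n w
      have h1 := hz n w
      rw [hρint n (z n), hρint n w] at h1
      have h2 : 0 ≤ t n * dist x₀ (z n) ^ 2 := by positivity
      have h3 : 0 < 1 - t n := by linarith [ht_lt n]
      rw [div_mul_eq_mul_div, ← sub_le_iff_le_add', le_div_iff₀ h3]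
      nlinarith
    -- compact limit point
    obtain ⟨zbar, hzbarK, φ, hφ, hzconv⟩ := hconv.tendsto_subseq hzK
    have htφ : Filter.Tendsto (fun n => t (φ n)) Filter.atTop (nhds 0) :=
      ht0.comp hφ.tendsto_atTop
    -- a uniform bound for dominated convergence
    obtain ⟨rX, hrX⟩ := hXb.subset_closedBall x₀
    obtain ⟨rK, hrK⟩ := hconv.isBounded.subset_closedBall x₀
    set C : ℝ := (max rX 0 + max rK 0) ^ 2 with hCdef
    have hbound : ∀ x ∈ X, ∀ n, dist x (z (φ n)) ^ 2 ≤ C := by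
      intro x hx n
      have h1 : dist x x₀ ≤ max rX 0 :=
        le_trans (by simpa [Metric.mem_closedBall] using hrX hx) (le_max_left _ _)
      have h2 : dist x₀ (z (φ n)) ≤ max rK 0 := by
        have := hrK (hzK (φ n))
        exact le_trans (by simpa [Metric.mem_closedBall, dist_comm] using this) (le_max_left _ _)
      have h3 : dist x (z (φ n)) ≤ max rX 0 + max rK 0 :=
        le_trans (dist_triangle x x₀ (z (φ n))) (add_le_add h1 h2)
      exact pow_le_pow_left₀ dist_nonneg h3 2
    -- I (z (φ n)) → I zbar by dominated convergence
    have Icont : Filter.Tendsto (fun n => I (z (φ n))) Filter.atTop (nhds (I zbar)) := by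
      refine tendsto_integral_of_dominated_convergence (fun _ => C) ?_ (integrable_const C) ?_ ?_
      · intro n
        exact ((continuous_id.dist continuous_const).pow 2).aestronglyMeasurable
      · intro n
        filter_upwards [hμmem] with x hx
        rw [Real.norm_of_nonneg (sq_nonneg _)]
        exact hbound x hx n
      · refine Filter.Eventually.of_forall fun x => ?_
        have hc : Continuous fun w => dist x w ^ 2 := (continuous_const.dist continuous_id).pow 2
        exact (hc.continuousAt.tendsto).comp hzconv
    -- zbar is a barycenter of μ, hence zbar = ystar
    have hzbar_bary : ∀ w, I zbar ≤ I w := by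
      intro w
      have hR : Filter.Tendsto (fun n => I w + (t (φ n) / (1 - t (φ n))) * dist x₀ w ^ 2)
          Filter.atTop (nhds (I w)) := by
        have h1 : Filter.Tendsto (fun n => t (φ n) / (1 - t (φ n))) Filter.atTop (nhds 0) := by
          have hone : Filter.Tendsto (fun n => 1 - t (φ n)) Filter.atTop (nhds 1) := by
            have := (tendsto_const_nhds :
              Filter.Tendsto (fun _ : ℕ => (1:ℝ)) Filter.atTop (nhds 1)).sub htφ
            simpa using this
          have h := (htφ.div hone one_ne_zero :
            Filter.Tendsto (fun n => t (φ n) / (1 - t (φ n))) Filter.atTop (nhds (0 / 1)))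
          rwa [zero_div] at h
        have := (tendsto_const_nhds (x := I w)).add ((h1.mul_const (dist x₀ w ^ 2)))
        simpa using this
      exact le_of_tendsto_of_tendsto' Icont hR (fun n => hzmin (φ n) w)
    have hzbar_eq : zbar = ystar := huy zbar hzbar_bary
    -- contradiction with hlt
    have hdlim : Filter.Tendsto (fun n => dist x₀ (z (φ n)) ^ 2) Filter.atTop
        (nhds (dist x₀ zbar ^ 2)) := by
      have hc : Continuous fun w => dist x₀ w ^ 2 := (continuous_const.dist continuous_id).pow 2
      exact (hc.continuousAt.tendsto).comp hzconv
    have : dist x₀ zbar ^ 2 ≤ I ystar :=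
      le_of_tendsto hdlim (Filter.Eventually.of_forall fun n => hdzn (φ n))
    rw [hzbar_eq] at this
    exact absurd this (not_le.mpr hlt)
  -- the two inequalities
  refine le_antisymm ?_ ?_
  · -- hard direction: circumradius in M ≤ Wasserstein circumradius
    refine le_iInf ?_
    rintro ⟨ν, hν⟩
    haveI := hν
    have claim : ENNReal.ofReal (I ystar) ≤ ⨆ x ∈ X, w2sq x ν := by
      have h1 : ∫⁻ x, w2sq x ν ∂μ ≤ ⨆ x ∈ X, w2sq x ν := by
        calc ∫⁻ x, w2sq x ν ∂μ ≤ ∫⁻ _, ⨆ x ∈ X, w2sq x ν ∂μ := by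
              refine lintegral_mono_ae ?_
              filter_upwards [hμmem] with x hx
              exact le_biSup (fun x => w2sq x ν) hx
          _ = ⨆ x ∈ X, w2sq x ν := by simp
      -- joint a.e.-measurability via a countable dense subset of `X`
      obtain ⟨D, hDcount, hDdense⟩ := hX.isSeparable
      have hmeas : AEMeasurable
          (Function.uncurry fun x y => ENNReal.ofReal (dist x y ^ 2)) (μ.prod ν) := by
        haveI : Countable D := hDcount.to_subtype
        set F : M × M → ENNReal :=
          fun p => ⨅ q : D, ENNReal.ofReal ((dist p.1 q + dist (q : M) p.2) ^ 2) with hFdef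
        have hFmeas : Measurable F := by
          refine Measurable.iInf fun q => ?_
          have hcont1 : Measurable fun p : M × M => dist p.1 (q : M) :=
            (Continuous.measurable (continuous_id.dist continuous_const)).comp measurable_fst
          have hcont2 : Measurable fun p : M × M => dist (q : M) p.2 :=
            (Continuous.measurable (continuous_const.dist continuous_id)).comp measurable_snd
          exact ENNReal.measurable_ofReal.comp ((hcont1.add hcont2).pow_const 2)
        have hae : ∀ᵐ p ∂(μ.prod ν), (p : M × M).1 ∈ X := by
          rw [MeasureTheory.ae_iff]
          have hnull : (μ.prod ν) (Xᶜ ×ˢ (Set.univ : Set M)) = 0 := by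
            rw [Measure.prod_prod, hμX, zero_mul]
          refine measure_mono_null (fun p hp => ?_) hnull
          exact Set.mem_prod.2 ⟨hp, Set.mem_univ _⟩
        refine ⟨F, hFmeas, ?_⟩
        filter_upwards [hae] with p hp
        have hle : ENNReal.ofReal (dist p.1 p.2 ^ 2) ≤ F p := by
          refine le_iInf fun q => ?_
          refine ENNReal.ofReal_le_ofReal ?_
          refine pow_le_pow_left₀ dist_nonneg (dist_triangle p.1 (q : M) p.2) 2
        have hge : F p ≤ ENNReal.ofReal (dist p.1 p.2 ^ 2) := by
          have hxc : p.1 ∈ closure D := hDdense hp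
          obtain ⟨u, hu_mem, hu_tend⟩ := mem_closure_iff_seq_limit.1 hxc
          have hcont : Continuous fun w : M =>
              ENNReal.ofReal ((dist p.1 w + dist w p.2) ^ 2) :=
            ENNReal.continuous_ofReal.comp
              (((continuous_const.dist continuous_id).add
                (continuous_id.dist continuous_const)).pow 2)
          have htt : Filter.Tendsto
              (fun n => ENNReal.ofReal ((dist p.1 (u n) + dist (u n) p.2) ^ 2))
              Filter.atTop (nhds (ENNReal.ofReal ((dist p.1 p.1 + dist p.1 p.2) ^ 2))) :=
            (hcont.continuousAt.tendsto).comp hu_tend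
          have htt' : Filter.Tendsto
              (fun n => ENNReal.ofReal ((dist p.1 (u n) + dist (u n) p.2) ^ 2))
              Filter.atTop (nhds (ENNReal.ofReal (dist p.1 p.2 ^ 2))) := by
            simpa using htt
          refine ge_of_tendsto htt' ?_
          refine Filter.Eventually.of_forall fun n => ?_
          exact iInf_le (fun q : D => ENNReal.ofReal ((dist p.1 q + dist (q : M) p.2) ^ 2))
            ⟨u n, hu_mem n⟩
        exact le_antisymm hle hge
      have hswap : ∫⁻ x, w2sq x ν ∂μ
          = ∫⁻ y, ∫⁻ x, ENNReal.ofReal (dist x y ^ 2) ∂μ ∂ν := by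
        simp only [w2sq]
        exact lintegral_lintegral_swap hmeas
      have h2 : ENNReal.ofReal (I ystar) ≤ ∫⁻ x, w2sq x ν ∂μ := by
        rw [hswap]
        calc ENNReal.ofReal (I ystar)
            = ∫⁻ _, ENNReal.ofReal (I ystar) ∂ν := by simp
          _ ≤ ∫⁻ y, ∫⁻ x, ENNReal.ofReal (dist x y ^ 2) ∂μ ∂ν := by
              refine lintegral_mono fun y => ?_
              rw [aux_lintegral_eq hXb hμX y]
              exact ENNReal.ofReal_le_ofReal (hystar y)
      exact h2.trans h1
    have hWT : (⨆ x ∈ X, w2sq x ν) ≤ (⨆ x ∈ X, w2sq x ν ^ (1/2:ℝ)) ^ (2:ℕ) := by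
      refine iSup₂_le fun x hx => ?_
      calc w2sq x ν = (w2sq x ν ^ (1/2:ℝ)) ^ (2:ℕ) := (aux_rpow_half_sq _).symm
        _ ≤ (⨆ x ∈ X, w2sq x ν ^ (1/2:ℝ)) ^ (2:ℕ) :=
          pow_le_pow_left₀ zero_le (le_biSup (fun x => w2sq x ν ^ (1/2:ℝ)) hx) 2
    refine le_trans (iInf_le _ ystar) ?_
    refine iSup₂_le fun x hx => ?_
    have h1 : ENNReal.ofReal (dist x ystar) ^ (2:ℕ)
        ≤ (⨆ x ∈ X, w2sq x ν ^ (1/2:ℝ)) ^ (2:ℕ) := by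
      rw [← ENNReal.ofReal_pow dist_nonneg]
      exact le_trans (ENNReal.ofReal_le_ofReal (key x hx)) (claim.trans hWT)
    calc ENNReal.ofReal (dist x ystar)
        = (ENNReal.ofReal (dist x ystar) ^ (2:ℕ)) ^ (1/2:ℝ) := (aux_sq_rpow_half _).symm
      _ ≤ ((⨆ x ∈ X, w2sq x ν ^ (1/2:ℝ)) ^ (2:ℕ)) ^ (1/2:ℝ) :=
        ENNReal.rpow_le_rpow h1 (by norm_num)
      _ = ⨆ x ∈ X, w2sq x ν ^ (1/2:ℝ) := aux_sq_rpow_half _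
  · -- easy direction: via Dirac measures
    refine le_iInf fun y => ?_
    refine iInf_le_of_le ⟨Measure.dirac y, inferInstance⟩ ?_
    refine iSup₂_le fun x hx => ?_
    have hd : w2sq x (Measure.dirac y) = ENNReal.ofReal (dist x y) ^ (2:ℕ) := by
      rw [w2sq, lintegral_dirac, ← ENNReal.ofReal_pow dist_nonneg]
    rw [hd, aux_sq_rpow_half]
    exact le_biSup (fun x => ENNReal.ofReal (dist x y)) hx
end

section
/- Under the previous hypotheses (X ⊆ M compact, conv(X) compact, barycenters exist, and some variance-maximizing μ has a unique barycenter), the circumcenter y ∈ conv(X) of X is unique. -/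
open MeasureTheory

section aux
set_option linter.unusedSectionVars false
variable {M : Type*} [MetricSpace M] [MeasurableSpace M] [BorelSpace M]

lemma ae_mem_of_compl_zero {X : Set M} {μ : Measure M} (h : μ Xᶜ = 0) :
    ∀ᵐ x ∂μ, x ∈ X := by rw [ae_iff]; exact h

lemma integrable_distsq {X : Set M} (hX : IsCompact X) {μ : Measure M}
    [IsProbabilityMeasure μ] (hμ : μ Xᶜ = 0) (z : M) :
    Integrable (fun x => dist x z ^ 2) μ := by
  obtain ⟨r, hr⟩ := hX.isBounded.subset_closedBall z
  refine Integrable.mono' (integrable_const (r ^ 2))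
    (((continuous_id.dist continuous_const).pow 2).aestronglyMeasurable) ?_
  filter_upwards [ae_mem_of_compl_zero hμ] with x hx
  have : dist x z ≤ r := by simpa [Metric.mem_closedBall] using hr hx
  rw [Real.norm_eq_abs, abs_of_nonneg (by positivity)]
  exact pow_le_pow_left₀ dist_nonneg this 2

lemma F_nonneg {μ : Measure M} (z : M) : 0 ≤ ∫ x, dist x z ^ 2 ∂μ :=
  integral_nonneg fun x => by positivity

lemma F_le_const {X : Set M} (hX : IsCompact X) {μ : Measure M}
    [IsProbabilityMeasure μ] (hμ : μ Xᶜ = 0) {z : M} {c : ℝ}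
    (hc : ∀ x ∈ X, dist x z ^ 2 ≤ c) :
    (∫ x, dist x z ^ 2 ∂μ) ≤ c := by
  calc (∫ x, dist x z ^ 2 ∂μ) ≤ ∫ _, c ∂μ := by
        refine integral_mono_ae (integrable_distsq hX hμ z) (integrable_const c) ?_
        filter_upwards [ae_mem_of_compl_zero hμ] with x hx using hc x hx
    _ = c := by simp

lemma F_lip {X : Set M} (hX : IsCompact X) {μ : Measure M}
    [IsProbabilityMeasure μ] (hμ : μ Xᶜ = 0) (a b : M) {D : ℝ}
    (hD : ∀ x ∈ X, dist x b ≤ D) :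
    (∫ x, dist x a ^ 2 ∂μ) ≤ (∫ x, dist x b ^ 2 ∂μ) + dist a b * (2 * D + dist a b) := by
  have key : ∀ x ∈ X, dist x a ^ 2 ≤ dist x b ^ 2 + dist a b * (2 * D + dist a b) := by
    intro x hx
    have h1 : dist x a ≤ dist x b + dist a b := by
      have := dist_triangle x b a
      simpa [dist_comm] using this
    have h2 : dist x a ^ 2 ≤ (dist x b + dist a b) ^ 2 :=
      pow_le_pow_left₀ dist_nonneg h1 2
    nlinarith [hD x hx, dist_nonneg (x := a) (y := b), dist_nonneg (x := x) (y := b)]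
  calc (∫ x, dist x a ^ 2 ∂μ)
      ≤ ∫ x, (dist x b ^ 2 + dist a b * (2 * D + dist a b)) ∂μ := by
        refine integral_mono_ae (integrable_distsq hX hμ a)
          ((integrable_distsq hX hμ b).add (integrable_const _)) ?_
        filter_upwards [ae_mem_of_compl_zero hμ] with x hx using key x hx
    _ = (∫ x, dist x b ^ 2 ∂μ) + dist a b * (2 * D + dist a b) := by
        rw [integral_add (integrable_distsq hX hμ b) (integrable_const _)]
        simp

lemma varE_eq {X : Set M} (hX : IsCompact X) {μ : Measure M}
    [IsProbabilityMeasure μ] (hμ : μ Xᶜ = 0) {y : M}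
    (hy : ∀ z : M, (∫ x, dist x y ^ 2 ∂μ) ≤ ∫ x, dist x z ^ 2 ∂μ) :
    varE μ = ENNReal.ofReal (∫ x, dist x y ^ 2 ∂μ) := by
  have key : ∀ z : M, (∫⁻ x, ENNReal.ofReal (dist x z ^ 2) ∂μ)
      = ENNReal.ofReal (∫ x, dist x z ^ 2 ∂μ) := fun z =>
    (ofReal_integral_eq_lintegral_ofReal (integrable_distsq hX hμ z)
      (Filter.Eventually.of_forall fun x => by positivity)).symm
  refine le_antisymm ((iInf_le _ y).trans (key y).le)
    (le_iInf fun z => (key z).symm ▸ ENNReal.ofReal_le_ofReal (hy z))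

/-- The mixture measure `(1-t)μ + tδₓ`. -/
noncomputable def mix (μ : Measure M) (x : M) (t : ℝ) : Measure M :=
  ENNReal.ofReal (1 - t) • μ + ENNReal.ofReal t • Measure.dirac x

lemma mix_prob (μ : Measure M) [IsProbabilityMeasure μ] (x : M) {t : ℝ}
    (h0 : 0 ≤ t) (h1 : t ≤ 1) : IsProbabilityMeasure (mix μ x t) := by
  constructor
  simp only [mix, Measure.add_apply, Measure.smul_apply, smul_eq_mul, measure_univ,
    mul_one]
  rw [← ENNReal.ofReal_add (by linarith) h0]
  norm_num

lemma mix_compl_zero {X : Set M} (hX : IsCompact X) {μ : Measure M}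
    (hμ : μ Xᶜ = 0) {x : M} (hx : x ∈ X) (t : ℝ) : (mix μ x t) Xᶜ = 0 := by
  simp only [mix, Measure.add_apply, Measure.smul_apply, smul_eq_mul, hμ, mul_zero,
    zero_add]
  rw [Measure.dirac_apply' x hX.isClosed.measurableSet.compl]
  simp [Set.indicator_of_notMem, hx]

lemma F_mix {X : Set M} (hX : IsCompact X) {μ : Measure M}
    [IsProbabilityMeasure μ] (hμ : μ Xᶜ = 0) (x : M) {t : ℝ}
    (h0 : 0 ≤ t) (h1 : t ≤ 1) (z : M) :
    (∫ a, dist a z ^ 2 ∂(mix μ x t))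
      = (1 - t) * (∫ a, dist a z ^ 2 ∂μ) + t * dist x z ^ 2 := by
  have hm : StronglyMeasurable (fun a : M => dist a z ^ 2) :=
    ((continuous_id.dist continuous_const).pow 2).stronglyMeasurable
  rw [mix, integral_add_measure, integral_smul_measure, integral_smul_measure,
    integral_dirac' _ _ hm]
  · rw [ENNReal.toReal_ofReal (by linarith), ENNReal.toReal_ofReal h0]
    simp only [smul_eq_mul]
  · exact ((integrable_distsq hX hμ z).smul_measure ENNReal.ofReal_ne_top)
  · refine Integrable.smul_measure ?_ ENNReal.ofReal_ne_top
    refine ⟨hm.aestronglyMeasurable, ?_⟩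
    rw [HasFiniteIntegral]
    rw [lintegral_dirac' _ (by fun_prop : Measurable fun a : M => ‖dist a z ^ 2‖ₑ)]
    exact enorm_lt_top

end aux

/-- If some variance-maximizing measure on `X` has a unique barycenter, then the
circumcenter of `X` is unique, and it lies in the barycentric convex hull of `X`. -/
theorem circumcenter_unique {M : Type*}
    [MetricSpace M] [CompleteSpace M] [MeasurableSpace M] [BorelSpace M]
    (X : Set M) (hX : IsCompact X) (hXne : X.Nonempty)
    (hconv : IsCompact {y : M | ∃ μ : Measure M, IsProbabilityMeasure μ ∧ μ Xᶜ = 0 ∧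
      ∀ z : M, (∫ x, dist x y ^ 2 ∂μ) ≤ ∫ x, dist x z ^ 2 ∂μ})
    (hbary : ∀ μ : Measure M, IsProbabilityMeasure μ → μ Xᶜ = 0 →
      ∃ y : M, ∀ z : M, (∫ x, dist x y ^ 2 ∂μ) ≤ ∫ x, dist x z ^ 2 ∂μ)
    (huniq : ∃ μ : Measure M, IsProbabilityMeasure μ ∧ μ Xᶜ = 0 ∧
      (∀ μ' : Measure M, IsProbabilityMeasure μ' → μ' Xᶜ = 0 → varE μ' ≤ varE μ) ∧
      (∃! y : M, ∀ z : M, (∫ x, dist x y ^ 2 ∂μ) ≤ ∫ x, dist x z ^ 2 ∂μ)) :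
    ∃ y ∈ {y : M | ∃ μ : Measure M, IsProbabilityMeasure μ ∧ μ Xᶜ = 0 ∧
        ∀ z : M, (∫ x, dist x y ^ 2 ∂μ) ≤ ∫ x, dist x z ^ 2 ∂μ},
      ((⨆ x ∈ X, ENNReal.ofReal (dist x y)) =
        ⨅ y' : M, ⨆ x ∈ X, ENNReal.ofReal (dist x y')) ∧
      ∀ w : M, ((⨆ x ∈ X, ENNReal.ofReal (dist x w)) =
        ⨅ y' : M, ⨆ x ∈ X, ENNReal.ofReal (dist x y')) → w = y := by
  classical
  obtain ⟨μ, hμP, hμX, hmax, y, hy, hyuniq⟩ := huniq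
  haveI := hμP
  set V : ℝ := ∫ x, dist x y ^ 2 ∂μ with hVdef
  -- the maximum of `dist · y'` over `X` realizes the ENNReal-supremum
  have sup_eq : ∀ y' : M, ∃ x' ∈ X, (∀ x ∈ X, dist x y' ≤ dist x' y') ∧
      (⨆ x ∈ X, ENNReal.ofReal (dist x y')) = ENNReal.ofReal (dist x' y') := by
    intro y'
    obtain ⟨x', hx'X, hmaxd⟩ := hX.exists_isMaxOn hXne
      ((continuous_id.dist continuous_const).continuousOn)
    refine ⟨x', hx'X, fun x hx => hmaxd hx, le_antisymm
      (iSup₂_le fun x hx => ENNReal.ofReal_le_ofReal (hmaxd hx)) ?_⟩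
    exact le_iSup₂_of_le x' hx'X le_rfl
  -- Step A: every point of X is within √V of y
  have stepA : ∀ x ∈ X, dist x y ^ 2 ≤ V := by
    intro x hxX
    set t : ℕ → ℝ := fun n => 1 / (n + 2) with htdef
    have ht0 : ∀ n, 0 < t n := fun n => by positivity
    have ht1 : ∀ n, t n ≤ 1 / 2 := by
      intro n
      apply div_le_div_of_nonneg_left one_pos.le two_pos
      exact_mod_cast by linarith [Nat.cast_nonneg (α := ℝ) n]
    have ht1' : ∀ n, t n ≤ 1 := fun n => (ht1 n).trans (by norm_num)
    have hprob : ∀ n, IsProbabilityMeasure (mix μ x (t n)) :=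
      fun n => mix_prob μ x (ht0 n).le (ht1' n)
    have hcompl : ∀ n, (mix μ x (t n)) Xᶜ = 0 :=
      fun n => mix_compl_zero hX hμX hxX (t n)
    choose z hz using fun n => hbary (mix μ x (t n)) (hprob n) (hcompl n)
    have hzK : ∀ n, z n ∈ {y : M | ∃ μ : Measure M, IsProbabilityMeasure μ ∧ μ Xᶜ = 0 ∧
        ∀ z' : M, (∫ a, dist a y ^ 2 ∂μ) ≤ ∫ a, dist a z' ^ 2 ∂μ} :=
      fun n => ⟨mix μ x (t n), hprob n, hcompl n, hz n⟩
    have hVn : ∀ n, (1 - t n) * (∫ a, dist a (z n) ^ 2 ∂μ) + t n * dist x (z n) ^ 2 ≤ V := by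
      intro n
      have hle := hmax (mix μ x (t n)) (hprob n) (hcompl n)
      haveI := hprob n
      rw [varE_eq hX (hcompl n) (hz n), varE_eq hX hμX hy,
        F_mix hX hμX x (ht0 n).le (ht1' n)] at hle
      exact (ENNReal.ofReal_le_ofReal_iff (F_nonneg y)).mp hle
    have hd : ∀ n, dist x (z n) ^ 2 ≤ V := by
      intro n
      have h1 := hVn n
      have h2 : V ≤ ∫ a, dist a (z n) ^ 2 ∂μ := hy (z n)
      nlinarith [ht0 n, ht1' n]
    have hF : ∀ n, (∫ a, dist a (z n) ^ 2 ∂μ) ≤ V / (1 - t n) := by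
      intro n
      have h1 := hVn n
      have hpos : (0:ℝ) < 1 - t n := by linarith [ht1 n]
      rw [le_div_iff₀ hpos]
      nlinarith [ht0 n, sq_nonneg (dist x (z n))]
    obtain ⟨a, haK, φ, hφ, hφt⟩ := hconv.tendsto_subseq hzK
    -- a distance bound D on X ∪ (barycenter hull)
    obtain ⟨D, hD⟩ := Metric.isBounded_iff.mp (hX.union hconv).isBounded
    have hDn : ∀ n, ∀ p ∈ X, dist p (z (φ n)) ≤ D := fun n p hp =>
      hD (Set.mem_union_left _ hp) (Set.mem_union_right _ (hzK (φ n)))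
    -- limits
    have htlim : Filter.Tendsto (fun n => t (φ n)) Filter.atTop (nhds 0) := by
      have h1 : Filter.Tendsto (fun n : ℕ => ((n : ℝ) + 2)) Filter.atTop Filter.atTop :=
        Filter.tendsto_atTop_add_const_right _ 2 tendsto_natCast_atTop_atTop
      have h2 := h1.inv_tendsto_atTop
      have h3 : Filter.Tendsto t Filter.atTop (nhds 0) := by
        simpa [htdef, one_div, Pi.inv_def] using h2
      exact h3.comp hφ.tendsto_atTop
    have hdlim : Filter.Tendsto (fun n => dist a (z (φ n))) Filter.atTop (nhds 0) := by
      have h := tendsto_iff_dist_tendsto_zero.mp hφt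
      simpa [dist_comm] using h
    have haxd : dist x a ^ 2 ≤ V := by
      have hxa : Filter.Tendsto (fun n => dist x (z (φ n)) ^ 2) Filter.atTop
          (nhds (dist x a ^ 2)) := by
        have hc : Continuous fun p : M => dist x p ^ 2 :=
          (continuous_const.dist continuous_id).pow 2
        have h := (hc.tendsto a).comp hφt
        simpa [Function.comp_def] using h
      exact le_of_tendsto hxa (Filter.Eventually.of_forall fun n => hd (φ n))
    have hFa : (∫ p, dist p a ^ 2 ∂μ) ≤ V := by
      have hlim : Filter.Tendsto
          (fun n => V / (1 - t (φ n)) + dist a (z (φ n)) * (2 * D + dist a (z (φ n))))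
          Filter.atTop (nhds V) := by
        have h1 : Filter.Tendsto (fun n => V / (1 - t (φ n))) Filter.atTop (nhds V) := by
          have := (tendsto_const_nhds (x := V) (f := Filter.atTop (α := ℕ))).div
            ((tendsto_const_nhds (x := (1:ℝ))).sub htlim) (by norm_num)
          simpa [Pi.div_def] using this
        have h2 : Filter.Tendsto
            (fun n => dist a (z (φ n)) * (2 * D + dist a (z (φ n))))
            Filter.atTop (nhds 0) := by
          have := hdlim.mul (((tendsto_const_nhds (x := 2 * D)).add hdlim))
          simpa using this
        simpa using h1.add h2
      refine ge_of_tendsto hlim (Filter.Eventually.of_forall fun n => ?_)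
      calc (∫ p, dist p a ^ 2 ∂μ)
          ≤ (∫ p, dist p (z (φ n)) ^ 2 ∂μ)
            + dist a (z (φ n)) * (2 * D + dist a (z (φ n))) :=
          F_lip hX hμX a (z (φ n)) (hDn n)
        _ ≤ V / (1 - t (φ n)) + dist a (z (φ n)) * (2 * D + dist a (z (φ n))) := by
            exact add_le_add_left (hF (φ n)) _
    have hab : a = y := hyuniq a fun z' => hFa.trans (hy z')
    rw [← hab]
    exact haxd
  -- conclusion
  obtain ⟨xy, hxyX, hxymax, hxysup⟩ := sup_eq y
  have hmain : (⨆ x ∈ X, ENNReal.ofReal (dist x y)) =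
      ⨅ y' : M, ⨆ x ∈ X, ENNReal.ofReal (dist x y') := by
    refine le_antisymm (le_iInf fun y' => ?_) (iInf_le _ y)
    obtain ⟨x', hx'X, hx'max, hx'sup⟩ := sup_eq y'
    rw [hxysup, hx'sup]
    refine ENNReal.ofReal_le_ofReal ?_
    refine le_of_pow_le_pow_left₀ two_ne_zero dist_nonneg ?_
    calc dist xy y ^ 2 ≤ V := stepA xy hxyX
      _ ≤ ∫ x, dist x y' ^ 2 ∂μ := hy y'
      _ ≤ dist x' y' ^ 2 := F_le_const hX hμX fun x hx =>
          pow_le_pow_left₀ dist_nonneg (hx'max x hx) 2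
  refine ⟨y, ⟨μ, hμP, hμX, hy⟩, hmain, ?_⟩
  intro w hw
  obtain ⟨xw, hxwX, hxwmax, hxwsup⟩ := sup_eq w
  have heq : dist xw w = dist xy y := by
    have : ENNReal.ofReal (dist xw w) = ENNReal.ofReal (dist xy y) := by
      rw [← hxwsup, ← hxysup, hw, hmain]
    exact (ENNReal.ofReal_eq_ofReal_iff dist_nonneg dist_nonneg).mp this
  refine hyuniq w fun z' => ?_
  calc (∫ x, dist x w ^ 2 ∂μ) ≤ dist xw w ^ 2 := F_le_const hX hμX fun x hx =>
        pow_le_pow_left₀ dist_nonneg (hxwmax x hx) 2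
    _ = dist xy y ^ 2 := by rw [heq]
    _ ≤ V := stepA xy hxyX
    _ ≤ ∫ x, dist x z' ^ 2 ∂μ := hy z'
end

section
/- Under the previous hypotheses (X ⊆ M compact, conv(X) compact, barycenters exist, and some variance-maximizing μ has a unique barycenter), the maximal variance among probability measures on X equals R², where R is the circumradius of X, and every variance-maximizing μ gives full mass to the sphere ∂B(y,R) = {x : d(x,y) = R}, where y is the circumcenter. -/
open MeasureTheory

section Helpers
variable {M : Type*} [MetricSpace M] [MeasurableSpace M] [BorelSpace M]
variable {X : Set M}

lemma contDistSq (z : M) : Continuous fun a : M => dist a z ^ 2 :=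
  (continuous_id.dist continuous_const).pow 2

lemma aeMemX {μ : Measure M} (h0 : μ Xᶜ = 0) : ∀ᵐ a ∂μ, a ∈ X := by
  rw [MeasureTheory.ae_iff]
  exact h0

lemma integrableDistSq (hX : IsCompact X) (hXne : X.Nonempty)
    (μ : Measure M) [IsFiniteMeasure μ] (h0 : μ Xᶜ = 0) (z : M) :
    Integrable (fun a => dist a z ^ 2) μ := by
  obtain ⟨x₀, -, hx₀⟩ := hX.exists_isMaxOn hXne
    ((continuous_id.dist (continuous_const (y := z)))).continuousOn
  refine (integrable_const (dist x₀ z ^ 2)).mono' (contDistSq z).aestronglyMeasurable ?_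
  filter_upwards [aeMemX h0] with a ha
  rw [Real.norm_eq_abs, abs_of_nonneg (by positivity)]
  exact pow_le_pow_left₀ dist_nonneg (hx₀ ha) 2

lemma varE_eq_ofReal (μ : Measure M) [IsProbabilityMeasure μ]
    (hint : ∀ z : M, Integrable (fun a => dist a z ^ 2) μ)
    (yb : M) (hyb : ∀ z, (∫ a, dist a yb ^ 2 ∂μ) ≤ ∫ a, dist a z ^ 2 ∂μ) :
    varE μ = ENNReal.ofReal (∫ a, dist a yb ^ 2 ∂μ) := by
  have key : ∀ z : M, (∫⁻ a, ENNReal.ofReal (dist a z ^ 2) ∂μ)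
      = ENNReal.ofReal (∫ a, dist a z ^ 2 ∂μ) := fun z =>
    (ofReal_integral_eq_lintegral_ofReal (hint z)
      (Filter.Eventually.of_forall fun a => by positivity)).symm
  refine le_antisymm ?_ ?_
  · rw [varE, ← key yb]; exact iInf_le _ yb
  · exact le_iInf fun z => by rw [key z]; exact ENNReal.ofReal_le_ofReal (hyb z)

end Helpers

section Key
variable {M : Type*} [MetricSpace M] [MeasurableSpace M] [BorelSpace M]

lemma key_dist_le (X : Set M) (hX : IsCompact X) (hXne : X.Nonempty)
    (hconv : IsCompact {y : M | ∃ μ : Measure M, IsProbabilityMeasure μ ∧ μ Xᶜ = 0 ∧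
      ∀ z : M, (∫ x, dist x y ^ 2 ∂μ) ≤ ∫ x, dist x z ^ 2 ∂μ})
    (hbary : ∀ μ : Measure M, IsProbabilityMeasure μ → μ Xᶜ = 0 →
      ∃ y : M, ∀ z : M, (∫ x, dist x y ^ 2 ∂μ) ≤ ∫ x, dist x z ^ 2 ∂μ)
    (μ₀ : Measure M) (hp : IsProbabilityMeasure μ₀) (h0 : μ₀ Xᶜ = 0)
    (hmax : ∀ μ' : Measure M, IsProbabilityMeasure μ' → μ' Xᶜ = 0 → varE μ' ≤ varE μ₀)
    (y₀ : M) (hy₀ : ∀ z, (∫ a, dist a y₀ ^ 2 ∂μ₀) ≤ ∫ a, dist a z ^ 2 ∂μ₀)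
    (hy₀u : ∀ y', (∀ z, (∫ a, dist a y' ^ 2 ∂μ₀) ≤ ∫ a, dist a z ^ 2 ∂μ₀) → y' = y₀)
    (x : M) (hx : x ∈ X) :
    dist x y₀ ^ 2 ≤ ∫ a, dist a y₀ ^ 2 ∂μ₀ := by
  classical
  set K := {y : M | ∃ μ : Measure M, IsProbabilityMeasure μ ∧ μ Xᶜ = 0 ∧
      ∀ z : M, (∫ x, dist x y ^ 2 ∂μ) ≤ ∫ x, dist x z ^ 2 ∂μ} with hK
  set I : M → ℝ := fun z => ∫ a, dist a z ^ 2 ∂μ₀ with hI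
  set V : ℝ := I y₀ with hV
  have hVnn : 0 ≤ V := integral_nonneg fun a => by positivity
  -- the sequence of weights
  set t : ℕ → ℝ := fun n => 1 / (n + 2) with ht
  have ht0 : ∀ n, 0 < t n := fun n => by positivity
  have ht1 : ∀ n, t n < 1 := fun n => by
    rw [ht]; rw [div_lt_one (by positivity)]
    have : (0:ℝ) ≤ n := Nat.cast_nonneg n
    linarith
  have htlim : Filter.Tendsto t Filter.atTop (nhds 0) := by
    have h1 : Filter.Tendsto (fun n : ℕ => ((n : ℝ) + 2)) Filter.atTop Filter.atTop :=
      Filter.tendsto_atTop_add_const_right _ 2 tendsto_natCast_atTop_atTop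
    simpa [ht, one_div, Pi.inv_def] using h1.inv_tendsto_atTop
  -- the perturbed measures
  set ν : ℕ → Measure M := fun n =>
    ENNReal.ofReal (1 - t n) • μ₀ + ENNReal.ofReal (t n) • Measure.dirac x with hν
  have hνprob : ∀ n, IsProbabilityMeasure (ν n) := by
    intro n
    constructor
    rw [hν]
    simp only [Measure.add_apply, Measure.smul_apply, smul_eq_mul, measure_univ, mul_one]
    rw [← ENNReal.ofReal_add (by linarith [ht1 n]) (ht0 n).le]
    norm_num
  have hν0 : ∀ n, ν n Xᶜ = 0 := by
    intro n
    have hdx : Measure.dirac x Xᶜ = 0 := by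
      rw [Measure.dirac_apply' _ hX.isClosed.measurableSet.compl]
      simp [hx]
    rw [hν]
    simp [h0, hdx]
  -- integrals against ν n
  have hIν : ∀ n (z : M), (∫ a, dist a z ^ 2 ∂(ν n))
      = (1 - t n) * I z + t n * dist x z ^ 2 := by
    intro n z
    have hint := integrableDistSq hX hXne μ₀ h0 z
    have h1 : Integrable (fun a => dist a z ^ 2) (ENNReal.ofReal (1 - t n) • μ₀) :=
      hint.smul_measure ENNReal.ofReal_ne_top
    have h2 : Integrable (fun a => dist a z ^ 2) (ENNReal.ofReal (t n) • Measure.dirac x) := by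
      refine Integrable.smul_measure ?_ ENNReal.ofReal_ne_top
      constructor
      · exact (contDistSq z).aestronglyMeasurable
      · rw [hasFiniteIntegral_iff_norm]
        rw [lintegral_dirac]
        exact ENNReal.ofReal_lt_top
    rw [hν]
    rw [integral_add_measure h1 h2, integral_smul_measure, integral_smul_measure,
      integral_dirac]
    rw [ENNReal.toReal_ofReal (by linarith [ht1 n]), ENNReal.toReal_ofReal (ht0 n).le]
    simp [hI, smul_eq_mul]
  -- barycenters of the perturbed measures
  have hbn := fun n => hbary (ν n) (hνprob n) (hν0 n)
  set b : ℕ → M := fun n => (hbn n).choose with hb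
  have hbspec : ∀ n (z : M), (1 - t n) * I (b n) + t n * dist x (b n) ^ 2
      ≤ (1 - t n) * I z + t n * dist x z ^ 2 := by
    intro n z
    have := (hbn n).choose_spec z
    rwa [hIν n, hIν n] at this
  have hbK : ∀ n, b n ∈ K := fun n => ⟨ν n, hνprob n, hν0 n, (hbn n).choose_spec⟩
  -- variance comparison gives the key pointwise bound
  have hbound : ∀ n, dist x (b n) ^ 2 ≤ V := by
    intro n
    have hvle : varE (ν n) ≤ varE μ₀ := hmax (ν n) (hνprob n) (hν0 n)
    haveI := hνprob n
    have hintν : ∀ z : M, Integrable (fun a => dist a z ^ 2) (ν n) :=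
      integrableDistSq hX hXne (ν n) (hν0 n)
    have hv1 : varE (ν n) = ENNReal.ofReal ((1 - t n) * I (b n) + t n * dist x (b n) ^ 2) := by
      rw [varE_eq_ofReal (ν n) hintν (b n) (hbn n).choose_spec, hIν n]
    have hv0 : varE μ₀ = ENNReal.ofReal V :=
      varE_eq_ofReal μ₀ (integrableDistSq hX hXne μ₀ h0) y₀ hy₀
    rw [hv1, hv0, ENNReal.ofReal_le_ofReal_iff hVnn] at hvle
    have hB : V ≤ I (b n) := hy₀ (b n)
    nlinarith [ht0 n, ht1 n, mul_le_mul_of_nonneg_left hB (by linarith [ht1 n] : (0:ℝ) ≤ 1 - t n)]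
  -- pass to a convergent subsequence of barycenters
  obtain ⟨blim, hblimK, φ, hφmono, hφlim⟩ := hconv.tendsto_subseq hbK
  -- a uniform bound on distances between points of X and points of K
  obtain ⟨C, hC⟩ := Metric.isBounded_iff.mp (hX.union hconv).isBounded
  -- continuity of I along the subsequence, by dominated convergence
  have hIcont : Filter.Tendsto (fun k => I (b (φ k))) Filter.atTop (nhds (I blim)) := by
    refine tendsto_integral_of_dominated_convergence (fun _ => C ^ 2)
      (fun k => (contDistSq (b (φ k))).aestronglyMeasurable) (integrable_const _) ?_ ?_
    · intro k
      filter_upwards [aeMemX h0] with a ha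
      rw [Real.norm_eq_abs, abs_of_nonneg (by positivity)]
      have : dist a (b (φ k)) ≤ C := hC (Set.mem_union_left _ ha)
        (Set.mem_union_right _ (hbK (φ k)))
      exact pow_le_pow_left₀ dist_nonneg this 2
    · filter_upwards with a
      exact ((continuous_const.dist continuous_id).pow 2).continuousAt.tendsto.comp hφlim
  have htφ : Filter.Tendsto (fun k => t (φ k)) Filter.atTop (nhds 0) :=
    htlim.comp hφmono.tendsto_atTop
  have hdφ : Filter.Tendsto (fun k => dist x (b (φ k)) ^ 2) Filter.atTop
      (nhds (dist x blim ^ 2)) :=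
    ((continuous_const.dist continuous_id).pow 2).continuousAt.tendsto.comp hφlim
  -- blim is a barycenter of μ₀, hence equals y₀
  have hblim : blim = y₀ := by
    refine hy₀u blim fun z => ?_
    have hL : Filter.Tendsto
        (fun k => (1 - t (φ k)) * I (b (φ k)) + t (φ k) * dist x (b (φ k)) ^ 2)
        Filter.atTop (nhds ((1 - 0) * I blim + 0 * dist x blim ^ 2)) :=
      (((tendsto_const_nhds.sub htφ).mul hIcont).add (htφ.mul hdφ))
    have hR : Filter.Tendsto
        (fun k => (1 - t (φ k)) * I z + t (φ k) * dist x z ^ 2)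
        Filter.atTop (nhds ((1 - 0) * I z + 0 * dist x z ^ 2)) :=
      (((tendsto_const_nhds.sub htφ).mul tendsto_const_nhds).add
        (htφ.mul tendsto_const_nhds))
    have := le_of_tendsto_of_tendsto' hL hR fun k => hbspec (φ k) z
    simpa using this
  -- conclude
  have : Filter.Tendsto (fun k => dist x (b (φ k)) ^ 2) Filter.atTop
      (nhds (dist x y₀ ^ 2)) := hblim ▸ hdφ
  exact le_of_tendsto this (Filter.Eventually.of_forall fun k => hbound (φ k))

end Key

/-- If some variance-maximizing measure on `X` has a unique barycenter, then the maximal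
variance over `P(X)` equals `R²`, where `R` is the circumradius of `X`, and every
variance-maximizing measure gives full mass to the sphere `{x : d(x,y) = R}` around the
circumcenter `y`. -/
theorem maxVariance_eq_circumradius_sq {M : Type*}
    [MetricSpace M] [CompleteSpace M] [MeasurableSpace M] [BorelSpace M]
    (X : Set M) (hX : IsCompact X) (hXne : X.Nonempty)
    (hconv : IsCompact {y : M | ∃ μ : Measure M, IsProbabilityMeasure μ ∧ μ Xᶜ = 0 ∧
      ∀ z : M, (∫ x, dist x y ^ 2 ∂μ) ≤ ∫ x, dist x z ^ 2 ∂μ})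
    (hbary : ∀ μ : Measure M, IsProbabilityMeasure μ → μ Xᶜ = 0 →
      ∃ y : M, ∀ z : M, (∫ x, dist x y ^ 2 ∂μ) ≤ ∫ x, dist x z ^ 2 ∂μ)
    (huniq : ∃ μ : Measure M, IsProbabilityMeasure μ ∧ μ Xᶜ = 0 ∧
      (∀ μ' : Measure M, IsProbabilityMeasure μ' → μ' Xᶜ = 0 → varE μ' ≤ varE μ) ∧
      (∃! y : M, ∀ z : M, (∫ x, dist x y ^ 2 ∂μ) ≤ ∫ x, dist x z ^ 2 ∂μ))
    -- `y` is the circumcenter of `X`: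
    (y : M) (hy : (⨆ x ∈ X, ENNReal.ofReal (dist x y)) =
      ⨅ y' : M, ⨆ x ∈ X, ENNReal.ofReal (dist x y')) :
    (∃ μ : Measure M, IsProbabilityMeasure μ ∧ μ Xᶜ = 0 ∧
      (∀ μ' : Measure M, IsProbabilityMeasure μ' → μ' Xᶜ = 0 → varE μ' ≤ varE μ) ∧
      varE μ = (⨅ y' : M, ⨆ x ∈ X, ENNReal.ofReal (dist x y')) ^ 2) ∧
    (∀ μ : Measure M, IsProbabilityMeasure μ → μ Xᶜ = 0 →
      (∀ μ' : Measure M, IsProbabilityMeasure μ' → μ' Xᶜ = 0 → varE μ' ≤ varE μ) →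
      μ {x : M | ENNReal.ofReal (dist x y) =
        ⨅ y' : M, ⨆ x' ∈ X, ENNReal.ofReal (dist x' y')} = 1) := by
  classical
  obtain ⟨μ₀, hp, h0, hmax, y₀, hy₀, hy₀u⟩ := huniq
  haveI := hp
  set R : ENNReal := ⨅ y' : M, ⨆ x ∈ X, ENNReal.ofReal (dist x y') with hRdef
  have hRy : (⨆ x ∈ X, ENNReal.ofReal (dist x y)) = R := hy
  set V : ℝ := ∫ a, dist a y₀ ^ 2 ∂μ₀ with hVdef
  have hVnn : 0 ≤ V := integral_nonneg fun a => by positivity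
  have hkey : ∀ x ∈ X, dist x y₀ ^ 2 ≤ V := fun x hx =>
    key_dist_le X hX hXne hconv hbary μ₀ hp h0 hmax y₀ hy₀ (fun y' h => hy₀u y' h) x hx
  have hv0 : varE μ₀ = ENNReal.ofReal V :=
    varE_eq_ofReal μ₀ (integrableDistSq hX hXne μ₀ h0) y₀ hy₀
  have hRne : R ≠ ⊤ := by
    obtain ⟨x₀, -, hx₀⟩ := hX.exists_isMaxOn hXne
      ((continuous_id.dist (continuous_const (y := y))).continuousOn)
    refine ne_top_of_le_ne_top (ENNReal.ofReal_ne_top (r := dist x₀ y)) ?_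
    rw [← hRy]
    exact iSup₂_le fun x hx => ENNReal.ofReal_le_ofReal (hx₀ hx)
  -- pointwise upper bound on X
  have hptle : ∀ a ∈ X, ENNReal.ofReal (dist a y ^ 2) ≤ R ^ 2 := fun a ha => by
    rw [ENNReal.ofReal_pow dist_nonneg, ← hRy]
    exact pow_le_pow_left' (le_iSup₂ (f := fun x _ => ENNReal.ofReal (dist x y)) a ha) 2
  -- upper bound on the lintegral
  have hub : ∀ (μ : Measure M), IsProbabilityMeasure μ → μ Xᶜ = 0 →
      (∫⁻ a, ENNReal.ofReal (dist a y ^ 2) ∂μ) ≤ R ^ 2 := by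
    intro μ hμp hμ0
    haveI := hμp
    calc (∫⁻ a, ENNReal.ofReal (dist a y ^ 2) ∂μ) ≤ ∫⁻ _, R ^ 2 ∂μ := by
          refine lintegral_mono_ae ?_
          filter_upwards [aeMemX hμ0] with a ha using hptle a ha
      _ = R ^ 2 := by rw [lintegral_const, measure_univ, mul_one]
  have hvarle : ∀ (μ : Measure M), varE μ ≤ ∫⁻ a, ENNReal.ofReal (dist a y ^ 2) ∂μ :=
    fun μ => iInf_le _ y
  -- lower bound
  have hlow : R ^ 2 ≤ ENNReal.ofReal V := by
    have h1 : R ≤ ENNReal.ofReal (Real.sqrt V) := by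
      refine le_trans (iInf_le _ y₀) (iSup₂_le fun x hx => ENNReal.ofReal_le_ofReal ?_)
      exact (Real.le_sqrt dist_nonneg hVnn).mpr (hkey x hx)
    calc R ^ 2 ≤ ENNReal.ofReal (Real.sqrt V) ^ 2 := pow_le_pow_left' h1 2
      _ = ENNReal.ofReal (Real.sqrt V ^ 2) := (ENNReal.ofReal_pow (Real.sqrt_nonneg V) 2).symm
      _ = ENNReal.ofReal V := by rw [Real.sq_sqrt hVnn]
  have hveq : varE μ₀ = R ^ 2 :=
    le_antisymm ((hvarle μ₀).trans (hub μ₀ hp h0)) (by rw [hv0]; exact hlow)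
  refine ⟨⟨μ₀, hp, h0, hmax, hveq⟩, ?_⟩
  intro μ hμp hμ0 hμmax
  haveI := hμp
  have hμ0' := hμmax μ₀ hp h0
  rw [hveq] at hμ0'
  have hμeq : varE μ = R ^ 2 :=
    le_antisymm ((hvarle μ).trans (hub μ hμp hμ0)) hμ0'
  have hfmeas : Measurable fun a => ENNReal.ofReal (dist a y ^ 2) :=
    ENNReal.measurable_ofReal.comp (contDistSq y).measurable
  have hfle : ∀ᵐ a ∂μ, ENNReal.ofReal (dist a y ^ 2) ≤ R ^ 2 := by
    filter_upwards [aeMemX hμ0] with a ha using hptle a ha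
  have hint : ∫⁻ a, ENNReal.ofReal (dist a y ^ 2) ∂μ = R ^ 2 :=
    le_antisymm (hub μ hμp hμ0) (by rw [← hμeq]; exact hvarle μ)
  have hR2ne : R ^ 2 ≠ ⊤ := ENNReal.pow_ne_top hRne
  have hsub : ∫⁻ a, (R ^ 2 - ENNReal.ofReal (dist a y ^ 2)) ∂μ = 0 := by
    rw [lintegral_sub hfmeas (by rw [hint]; exact hR2ne) hfle, hint, lintegral_const,
      measure_univ, mul_one, tsub_self]
  have hae : ∀ᵐ a ∂μ, R ^ 2 - ENNReal.ofReal (dist a y ^ 2) = 0 := by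
    have := (lintegral_eq_zero_iff (measurable_const.sub hfmeas)).mp hsub
    filter_upwards [this] with a ha using ha
  have haeq : ∀ᵐ a ∂μ, ENNReal.ofReal (dist a y) = R := by
    filter_upwards [hae, hfle] with a h1 h2
    have heq : ENNReal.ofReal (dist a y) ^ 2 = R ^ 2 := by
      rw [← ENNReal.ofReal_pow dist_nonneg]
      exact le_antisymm h2 (tsub_eq_zero_iff_le.mp h1) |>.symm ▸ rfl
    rcases lt_trichotomy (ENNReal.ofReal (dist a y)) R with h | h | h
    · exact absurd heq (ne_of_lt (ENNReal.pow_lt_pow_left two_ne_zero h))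
    · exact h
    · exact absurd heq.symm (ne_of_lt (ENNReal.pow_lt_pow_left two_ne_zero h))
  have hsmeas : MeasurableSet {x : M | ENNReal.ofReal (dist x y) = R} :=
    (ENNReal.measurable_ofReal.comp (continuous_id.dist continuous_const).measurable)
      (measurableSet_singleton R)
  exact (prob_compl_eq_zero_iff hsmeas).mp (ae_iff.mp haeq)
end

section
/- Let V : X × Y → ℝ be continuous on compact metric spaces. Then max_{μ∈P(X)} min_{y∈Y} ∫_X V(x,y)dμ(x) = min_{ν∈P(Y)} max_{x∈X} ∫_Y V(x,y)dν(y). -/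
open MeasureTheory Finset

lemma finite_minimax {I J : Type*} [Fintype I] [Fintype J] [Nonempty I] [Nonempty J]
    (A : I → J → ℝ) (w : ℝ)
    (hw : ∀ q : J → ℝ, (∀ j, 0 ≤ q j) → (∑ j, q j = 1) → ∃ i, w ≤ ∑ j, A i j * q j) :
    ∃ p : I → ℝ, (∀ i, 0 ≤ p i) ∧ (∑ i, p i = 1) ∧ ∀ j, w ≤ ∑ i, p i * A i j := by
  classical
  set U : Set (I → ℝ) := {z | ∀ i, z i < w} with hUdef
  set T : Set (I → ℝ) := {z | ∃ q : J → ℝ, (∀ j, 0 ≤ q j) ∧ (∑ j, q j = 1) ∧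
      ∀ i, ∑ j, A i j * q j ≤ z i} with hTdef
  have hUeq : U = ⋂ i, {z : I → ℝ | z i < w} := by
    ext z; simp [hUdef, Set.mem_iInter]
  have hUopen : IsOpen U := by
    rw [hUeq]
    exact isOpen_iInter_of_finite fun i => isOpen_lt (continuous_apply i) continuous_const
  have hUconv : Convex ℝ U := by
    rw [hUeq]
    exact convex_iInter fun i => convex_halfSpace_lt ⟨fun a b => rfl, fun c x => rfl⟩ w
  have hTconv : Convex ℝ T := by
    rintro z ⟨q, hq0, hq1, hqz⟩ z' ⟨q', hq0', hq1', hqz'⟩ a b ha hb hab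
    refine ⟨fun j => a * q j + b * q' j,
      fun j => add_nonneg (mul_nonneg ha (hq0 j)) (mul_nonneg hb (hq0' j)), ?_, fun i => ?_⟩
    · rw [Finset.sum_add_distrib, ← Finset.mul_sum, ← Finset.mul_sum, hq1, hq1']
      simpa using hab
    · have hsum : ∑ j, A i j * (a * q j + b * q' j)
          = a * ∑ j, A i j * q j + b * ∑ j, A i j * q' j := by
        rw [Finset.mul_sum, Finset.mul_sum, ← Finset.sum_add_distrib]
        exact Finset.sum_congr rfl fun j _ => by ring
      rw [hsum]
      have h1 := mul_le_mul_of_nonneg_left (hqz i) ha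
      have h2 := mul_le_mul_of_nonneg_left (hqz' i) hb
      simpa using add_le_add h1 h2
  have hdisj : Disjoint U T := by
    rw [Set.disjoint_left]
    rintro z hzU ⟨q, hq0, hq1, hqz⟩
    obtain ⟨i, hi⟩ := hw q hq0 hq1
    exact absurd (lt_of_le_of_lt (hi.trans (hqz i)) (hzU i)) (lt_irrefl w)
  obtain ⟨f, α, hfU, hfT⟩ := geometric_hahn_banach_open hUconv hUopen hTconv hdisj
  set c : I → ℝ := fun i => f (Pi.single i 1) with hcdef
  have hfrep : ∀ z : I → ℝ, f z = ∑ i, z i * c i := by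
    intro z
    have hz : z = ∑ i, (z i) • (Pi.single i 1 : I → ℝ) := by
      funext k
      simp [Finset.sum_apply, Pi.single_apply]
    conv_lhs => rw [hz]
    rw [map_sum]
    simp [hcdef, smul_eq_mul]
  have hz0 : (fun _ : I => w - 1) ∈ U := fun i => by norm_num
  have hfz0 : f (fun _ : I => w - 1) < α := hfU _ hz0
  have hcnn : ∀ i, 0 ≤ c i := by
    intro i
    by_contra hci
    push_neg at hci
    set t : ℝ := (α - f (fun _ : I => w - 1)) / (-c i) + 1 with htdef
    have htpos : 0 < t := by
      have h1 : 0 < α - f (fun _ : I => w - 1) := by linarith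
      have h2 : 0 < -c i := by linarith
      positivity
    have hmem : ((fun _ : I => w - 1) - t • (Pi.single i 1 : I → ℝ)) ∈ U := by
      intro k
      simp only [Pi.sub_apply, Pi.smul_apply, smul_eq_mul]
      rcases eq_or_ne k i with rfl | hk
      · simp; linarith
      · simp [Pi.single_apply, hk]
    have hval : α ≤ f ((fun _ : I => w - 1) - t • (Pi.single i 1 : I → ℝ)) := by
      rw [map_sub, _root_.map_smul, smul_eq_mul]
      have hcieq : f (Pi.single i 1) = c i := rfl
      rw [hcieq]
      have hcne : -c i ≠ 0 := neg_ne_zero.mpr (ne_of_lt hci)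
      have hmul : t * (-c i) = (α - f (fun _ : I => w - 1)) + (-c i) := by
        rw [htdef, add_mul, one_mul, div_mul_cancel₀ _ hcne]
      nlinarith
    exact absurd (hfU _ hmem) (not_lt.mpr hval)
  have hSnn : 0 ≤ ∑ i, c i := Finset.sum_nonneg fun i _ => hcnn i
  have hSpos : 0 < ∑ i, c i := by
    rcases hSnn.lt_or_eq with h | h
    · exact h
    · exfalso
      have hc0 : ∀ i, c i = 0 := by
        intro i
        have := (Finset.sum_eq_zero_iff_of_nonneg (fun i _ => hcnn i)).mp h.symm
        exact this i (Finset.mem_univ i)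
      obtain j0 := Classical.arbitrary J
      set q0 : J → ℝ := fun j => if j = j0 then 1 else 0 with hq0def
      have hzT : (fun i => ∑ j, A i j * q0 j) ∈ T :=
        ⟨q0, fun j => by by_cases hj : j = j0 <;> simp [hq0def, hj],
          by simp [hq0def], fun i => le_refl _⟩
      have h1 : (0 : ℝ) < α := by
        have := hfU _ hz0
        rw [hfrep] at this
        simpa [hc0] using this
      have h2 : α ≤ 0 := by
        have := hfT _ hzT
        rw [hfrep] at this
        simpa [hc0] using this
      linarith
  have hcol : ∀ j, α ≤ ∑ i, A i j * c i := by
    intro j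
    have hzj : (fun i => A i j) ∈ T := by
      refine ⟨fun j' => if j' = j then 1 else 0,
        fun j' => by by_cases hj : j' = j <;> simp [hj], by simp, fun i => ?_⟩
      simp [mul_ite, Finset.sum_ite_eq']
    have := hfT _ hzj
    rwa [hfrep] at this
  have hαw : w * (∑ i, c i) ≤ α := by
    by_contra h
    push_neg at h
    set S := ∑ i, c i
    set a : ℝ := (α / S + w) / 2 with hadef
    have h1 : α / S < w := (div_lt_iff₀ hSpos).mpr h
    have ha1 : α / S < a := by rw [hadef]; linarith
    have ha2 : a < w := by rw [hadef]; linarith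
    have hmem : (fun _ : I => a) ∈ U := fun i => ha2
    have hlt := hfU _ hmem
    rw [hfrep] at hlt
    have heq : ∑ i, (fun _ : I => a) i * c i = a * S := by
      simp [Finset.mul_sum, S]
    rw [heq] at hlt
    have : α < a * S := (div_lt_iff₀ hSpos).mp ha1
    linarith
  refine ⟨fun i => c i / (∑ k, c k), fun i => div_nonneg (hcnn i) hSpos.le, ?_, ?_⟩
  · rw [← Finset.sum_div, div_self hSpos.ne']
  · intro j
    have h2 : ∑ i, (c i / (∑ k, c k)) * A i j = (∑ i, A i j * c i) / (∑ k, c k) := by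
      rw [Finset.sum_div]
      exact Finset.sum_congr rfl fun i _ => by ring
    rw [h2, le_div_iff₀ hSpos]
    calc w * (∑ k, c k) ≤ α := hαw
      _ ≤ ∑ i, A i j * c i := hcol j



noncomputable def discMeasure {α : Type*} [MeasurableSpace α] {ι : Type*} [Fintype ι]
    (t : ι → α) (p : ι → ℝ) : Measure α :=
  ∑ i, ENNReal.ofReal (p i) • Measure.dirac (t i)

lemma discMeasure_isProb {α : Type*} [MeasurableSpace α] {ι : Type*} [Fintype ι]
    (t : ι → α) (p : ι → ℝ) (hp : ∀ i, 0 ≤ p i) (hs : ∑ i, p i = 1) :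
    IsProbabilityMeasure (discMeasure t p) := by
  constructor
  rw [discMeasure, Measure.finset_sum_apply]
  simp only [Measure.smul_apply, measure_univ, smul_eq_mul, mul_one]
  rw [← ENNReal.ofReal_sum_of_nonneg (fun i _ => hp i), hs, ENNReal.ofReal_one]

lemma integral_discMeasure {α : Type*} [MeasurableSpace α] [TopologicalSpace α]
    [CompactSpace α] [OpensMeasurableSpace α] [MeasurableSingletonClass α]
    {ι : Type*} [Fintype ι] (t : ι → α) (p : ι → ℝ) (hp : ∀ i, 0 ≤ p i)
    (f : α → ℝ) (hf : Continuous f) :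
    ∫ x, f x ∂(discMeasure t p) = ∑ i, p i * f (t i) := by
  have hint : ∀ i : ι, Integrable f (ENNReal.ofReal (p i) • Measure.dirac (t i)) := by
    intro i
    refine Integrable.smul_measure ?_ ENNReal.ofReal_ne_top
    exact hf.integrable_of_hasCompactSupport ((isClosed_tsupport f).isCompact)
  rw [discMeasure, integral_finset_sum_measure (fun i _ => hint i)]
  refine Finset.sum_congr rfl fun i _ => ?_
  rw [integral_smul_measure, integral_dirac, ENNReal.toReal_ofReal (hp i), smul_eq_mul]



/-- Minimax equality: the maximal `V`-variance over `P(X)` equals the minimal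
`V`-anti-variance over `P(Y)`. -/
theorem maxVarV_eq_minAntivarV {X Y : Type*}
    [MetricSpace X] [CompactSpace X] [MeasurableSpace X] [BorelSpace X] [Nonempty X]
    [MetricSpace Y] [CompactSpace Y] [MeasurableSpace Y] [BorelSpace Y] [Nonempty Y]
    (V : X × Y → ℝ) (hV : Continuous V) :
    (⨆ μ : {μ : Measure X // IsProbabilityMeasure μ}, ⨅ y : Y, ∫ x, V (x, y) ∂μ.1) =
      ⨅ ν : {ν : Measure Y // IsProbabilityMeasure ν}, ⨆ x : X, ∫ y, V (x, y) ∂ν.1 := by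
  classical
  haveI hPX : Nonempty {μ : Measure X // IsProbabilityMeasure μ} :=
    ⟨⟨Measure.dirac (Classical.arbitrary X), by infer_instance⟩⟩
  haveI hPY : Nonempty {ν : Measure Y // IsProbabilityMeasure ν} :=
    ⟨⟨Measure.dirac (Classical.arbitrary Y), by infer_instance⟩⟩
  set x0 := Classical.arbitrary X with hx0def
  set y0 := Classical.arbitrary Y with hy0def
  obtain ⟨M, hM⟩ : ∃ M : ℝ, ∀ p : X × Y, |V p| ≤ M := by
    obtain ⟨C, hC⟩ := (isCompact_univ : IsCompact (Set.univ : Set (X × Y))).exists_bound_of_continuousOn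
      hV.continuousOn
    exact ⟨C, fun p => by simpa [Real.norm_eq_abs] using hC p trivial⟩
  have hcx : ∀ y : Y, Continuous fun x => V (x, y) :=
    fun y => hV.comp (continuous_id.prodMk continuous_const)
  have hcy : ∀ x : X, Continuous fun y => V (x, y) :=
    fun x => hV.comp (continuous_const.prodMk continuous_id)
  -- bounds on integrals
  have hIx : ∀ (μ : Measure X), IsProbabilityMeasure μ → ∀ y, |∫ x, V (x, y) ∂μ| ≤ M := by
    intro μ hμ y
    have h := norm_integral_le_of_norm_le_const (μ := μ) (f := fun x => V (x, y)) (C := M)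
      (Filter.Eventually.of_forall fun x => by simpa [Real.norm_eq_abs] using hM (x, y))
    simpa [Real.norm_eq_abs, measure_univ] using h
  have hIy : ∀ (ν : Measure Y), IsProbabilityMeasure ν → ∀ x, |∫ y, V (x, y) ∂ν| ≤ M := by
    intro ν hν x
    have h := norm_integral_le_of_norm_le_const (μ := ν) (f := fun y => V (x, y)) (C := M)
      (Filter.Eventually.of_forall fun y => by simpa [Real.norm_eq_abs] using hM (x, y))
    simpa [Real.norm_eq_abs, measure_univ] using h
  have hbb : ∀ (μ : Measure X), IsProbabilityMeasure μ →
      BddBelow (Set.range fun y => ∫ x, V (x, y) ∂μ) := by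
    intro μ hμ
    refine ⟨-M, ?_⟩
    rintro _ ⟨y, rfl⟩
    exact neg_le_of_abs_le (hIx μ hμ y)
  have hba : ∀ (ν : Measure Y), IsProbabilityMeasure ν →
      BddAbove (Set.range fun x => ∫ y, V (x, y) ∂ν) := by
    intro ν hν
    refine ⟨M, ?_⟩
    rintro _ ⟨x, rfl⟩
    exact le_of_abs_le (hIy ν hν x)
  have hbdd2 : BddAbove (Set.range fun μ : {μ : Measure X // IsProbabilityMeasure μ} =>
      ⨅ y, ∫ x, V (x, y) ∂μ.1) := by
    refine ⟨M, ?_⟩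
    rintro _ ⟨μ, rfl⟩
    exact (ciInf_le (hbb μ.1 μ.2) y0).trans (le_of_abs_le (hIx μ.1 μ.2 y0))
  have hbdd4 : BddBelow (Set.range fun ν : {ν : Measure Y // IsProbabilityMeasure ν} =>
      ⨆ x, ∫ y, V (x, y) ∂ν.1) := by
    refine ⟨-M, ?_⟩
    rintro _ ⟨ν, rfl⟩
    exact (neg_le_of_abs_le (hIy ν.1 ν.2 x0)).trans (le_ciSup (hba ν.1 ν.2) x0)
  apply le_antisymm
  · -- easy direction via Fubini
    refine ciSup_le fun μ => le_ciInf fun ν => ?_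
    haveI hμ := μ.2
    haveI hν := ν.2
    have hVXY : Integrable V ((μ.1).prod ν.1) :=
      hV.integrable_of_hasCompactSupport (isClosed_tsupport _).isCompact
    have hswap : Integrable (fun p : Y × X => V (p.2, p.1)) ((ν.1).prod μ.1) := by
      have hc : Continuous fun p : Y × X => V (p.2, p.1) :=
        hV.comp (continuous_snd.prodMk continuous_fst)
      exact hc.integrable_of_hasCompactSupport (isClosed_tsupport _).isCompact
    have hg : Integrable (fun y => ∫ x, V (x, y) ∂μ.1) ν.1 := hswap.integral_prod_left
    have hh : Integrable (fun x => ∫ y, V (x, y) ∂ν.1) μ.1 := hVXY.integral_prod_left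
    have hfub : ∫ y, ∫ x, V (x, y) ∂μ.1 ∂ν.1 = ∫ x, ∫ y, V (x, y) ∂ν.1 ∂μ.1 :=
      integral_integral_swap (f := fun y x => V (x, y)) hswap
    have h1 : (⨅ y, ∫ x, V (x, y) ∂μ.1) ≤ ∫ y, (∫ x, V (x, y) ∂μ.1) ∂ν.1 := by
      have hpt : ∀ y, (⨅ y', ∫ x, V (x, y') ∂μ.1) ≤ ∫ x, V (x, y) ∂μ.1 :=
        fun y => ciInf_le (hbb μ.1 hμ) y
      have := integral_mono (μ := ν.1) (integrable_const (⨅ y', ∫ x, V (x, y') ∂μ.1)) hg hpt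
      rwa [integral_const, probReal_univ, one_smul] at this
    have h2 : ∫ x, (∫ y, V (x, y) ∂ν.1) ∂μ.1 ≤ ⨆ x, ∫ y, V (x, y) ∂ν.1 := by
      have hpt : ∀ x, ∫ y, V (x, y) ∂ν.1 ≤ ⨆ x', ∫ y, V (x', y) ∂ν.1 :=
        fun x => le_ciSup (hba ν.1 hν) x
      have := integral_mono (μ := μ.1) hh (integrable_const (⨆ x', ∫ y, V (x', y) ∂ν.1)) hpt
      rwa [integral_const, probReal_univ, one_smul] at this
    calc (⨅ y, ∫ x, V (x, y) ∂μ.1) ≤ ∫ y, ∫ x, V (x, y) ∂μ.1 ∂ν.1 := h1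
      _ = ∫ x, ∫ y, V (x, y) ∂ν.1 ∂μ.1 := hfub
      _ ≤ ⨆ x, ∫ y, V (x, y) ∂ν.1 := h2
  · -- hard direction
    set L := ⨆ μ : {μ : Measure X // IsProbabilityMeasure μ}, ⨅ y, ∫ x, V (x, y) ∂μ.1 with hLdef
    set R := ⨅ ν : {ν : Measure Y // IsProbabilityMeasure ν}, ⨆ x, ∫ y, V (x, y) ∂ν.1 with hRdef
    refine le_of_forall_pos_le_add fun ε hε => ?_
    set e := ε / 3 with hedef
    have he : 0 < e := by positivity
    obtain ⟨δ, hδ, hδV⟩ := Metric.uniformContinuous_iff.mp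
      (CompactSpace.uniformContinuous_of_continuous hV) e he
    obtain ⟨EX, _hEX, hEXfin, hEXcov⟩ := finite_cover_balls_of_compact
      (isCompact_univ : IsCompact (Set.univ : Set X)) hδ
    obtain ⟨FY, _hFY, hFYfin, hFYcov⟩ := finite_cover_balls_of_compact
      (isCompact_univ : IsCompact (Set.univ : Set Y)) hδ
    haveI := hEXfin.fintype
    haveI := hFYfin.fintype
    have hnetX : ∀ x : X, ∃ i : EX, dist x (i : X) < δ := by
      intro x
      obtain ⟨b, hb, hxb⟩ := Set.mem_iUnion₂.mp (hEXcov (Set.mem_univ x))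
      exact ⟨⟨b, hb⟩, by simpa [Metric.mem_ball] using hxb⟩
    have hnetY : ∀ y : Y, ∃ j : FY, dist y (j : Y) < δ := by
      intro y
      obtain ⟨b, hb, hyb⟩ := Set.mem_iUnion₂.mp (hFYcov (Set.mem_univ y))
      exact ⟨⟨b, hb⟩, by simpa [Metric.mem_ball] using hyb⟩
    haveI hneEX : Nonempty EX := ⟨(hnetX x0).choose⟩
    haveI hneFY : Nonempty FY := ⟨(hnetY y0).choose⟩
    have hucX : ∀ (x x' : X) (y : Y), dist x x' < δ → |V (x, y) - V (x', y)| < e := by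
      intro x x' y h
      have hd : dist ((x, y) : X × Y) (x', y) < δ := by
        rw [Prod.dist_eq]
        simp only [dist_self]
        exact max_lt h hδ
      simpa [Real.dist_eq] using hδV hd
    have hucY : ∀ (x : X) (y y' : Y), dist y y' < δ → |V (x, y) - V (x, y')| < e := by
      intro x y y' h
      have hd : dist ((x, y) : X × Y) (x, y') < δ := by
        rw [Prod.dist_eq]
        simp only [dist_self]
        exact max_lt hδ h
      simpa [Real.dist_eq] using hδV hd
    -- finite minimax
    have hw : ∀ q : FY → ℝ, (∀ j, 0 ≤ q j) → (∑ j, q j = 1) →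
        ∃ i : EX, R - 2 * e ≤ ∑ j, (fun (i : EX) (j : FY) => V (i.1, j.1)) i j * q j := by
      intro q hq0 hq1
      set νq := discMeasure (fun j : FY => (j : Y)) q with hνqdef
      haveI hνq : IsProbabilityMeasure νq := discMeasure_isProb _ _ hq0 hq1
      have hRle : R ≤ ⨆ x, ∫ y, V (x, y) ∂νq := by
        rw [hRdef]
        exact ciInf_le hbdd4 ⟨νq, hνq⟩
      have hlt : R - e < ⨆ x, ∫ y, V (x, y) ∂νq := by linarith
      obtain ⟨x, hx⟩ := exists_lt_of_lt_ciSup hlt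
      have hxint : ∫ y, V (x, y) ∂νq = ∑ j, q j * V (x, (j : Y)) :=
        integral_discMeasure _ _ hq0 _ (hcy x)
      obtain ⟨i, hi⟩ := hnetX x
      refine ⟨i, ?_⟩
      have hterm : ∀ j : FY, q j * V (x, (j : Y)) - q j * e ≤ q j * V (i.1, (j : Y)) := by
        intro j
        have h := hucX x i.1 (j : Y) hi
        have h2 : V (x, (j : Y)) - e ≤ V (i.1, (j : Y)) := by
          have := abs_lt.mp h
          linarith [this.2]
        nlinarith [hq0 j]
      have hsum : (∑ j, q j * V (x, (j : Y))) - e ≤ ∑ j, q j * V (i.1, (j : Y)) := by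
        have hs := Finset.sum_le_sum (fun j (_ : j ∈ Finset.univ) => hterm j)
        rwa [Finset.sum_sub_distrib, ← Finset.sum_mul, hq1, one_mul] at hs
      rw [hxint] at hx
      calc R - 2 * e ≤ ∑ j, q j * V (i.1, (j : Y)) := by linarith
        _ = ∑ j, (fun (i : EX) (j : FY) => V (i.1, j.1)) i j * q j :=
            Finset.sum_congr rfl fun j _ => mul_comm _ _
    obtain ⟨p, hp0, hp1, hpw⟩ :=
      finite_minimax (fun (i : EX) (j : FY) => V (i.1, j.1)) (R - 2 * e) hw
    set μp := discMeasure (fun i : EX => (i : X)) p with hμpdef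
    haveI hμp : IsProbabilityMeasure μp := discMeasure_isProb _ _ hp0 hp1
    have hinf : R - 3 * e ≤ ⨅ y, ∫ x, V (x, y) ∂μp := by
      refine le_ciInf fun y => ?_
      obtain ⟨j, hj⟩ := hnetY y
      have h1 : ∫ x, V (x, y) ∂μp = ∑ i, p i * V ((i : X), y) :=
        integral_discMeasure _ _ hp0 _ (hcx y)
      have hterm : ∀ i : EX, p i * V (i.1, (j : Y)) - p i * e ≤ p i * V (i.1, y) := by
        intro i
        have h := hucY i.1 y (j : Y) hj
        have h2 : V (i.1, (j : Y)) - e ≤ V (i.1, y) := by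
          have := abs_lt.mp h
          linarith [this.1]
        nlinarith [hp0 i]
      have hs := Finset.sum_le_sum (fun i (_ : i ∈ Finset.univ) => hterm i)
      rw [Finset.sum_sub_distrib, ← Finset.sum_mul, hp1, one_mul] at hs
      have h3 := hpw j
      rw [h1]
      linarith
    have hle : (⨅ y, ∫ x, V (x, y) ∂μp) ≤ L := by
      rw [hLdef]
      exact le_ciSup hbdd2 ⟨μp, hμp⟩
    have h3e : 3 * e = ε := by rw [hedef]; ring
    linarith
end
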